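/- arXiv:2110.13405 — 3 statements merged into one kernel-verified Lean document; each statement's English description precedes it below -/
import Mathlib

section
/- One has Σ_{x=0}^{(t−1)·(a_n+α)} Δ'(x) − Σ_{x=0}^{(t−1)·a_n} Δ(x) = −t(t−1)/2; equivalently, τ'((t−1)·(a_n+α) + 1) − τ((t−1)·a_n + 1) = −t(t−1)/2. -/
private lemma icc_insert (N : ℤ) (h : 0 ≤ N) :
    Finset.Icc (0:ℤ) (N+1) = insert (N+1) (Finset.Icc 0 N) := by
  ext x; simp only [Finset.mem_Icc, Finset.mem_insert]; omega

private lemma gaussIcc (m : ℕ) : 2 * ∑ x ∈ Finset.Icc (0:ℤ) (m:ℤ), x = (m:ℤ) * ((m:ℤ)+1) := by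
  induction m with
  | zero => simp
  | succ k ih =>
      have h : ((k+1:ℕ):ℤ) = (k:ℤ)+1 := by push_cast; ring
      rw [h, icc_insert _ (by positivity), Finset.sum_insert (by simp)]
      linarith [ih]

private lemma gauss0 (N : ℤ) (h : 0 ≤ N) : 2 * ∑ x ∈ Finset.Icc (0:ℤ) N, x = N*(N+1) := by
  obtain ⟨m, rfl⟩ : ∃ m : ℕ, N = (m:ℤ) := ⟨N.toNat, (Int.toNat_of_nonneg h).symm⟩
  exact gaussIcc m

private lemma icc_eq_insert_ioc (N : ℤ) (h : 0 ≤ N) :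
    Finset.Icc (0:ℤ) N = insert 0 (Finset.Ioc 0 N) := by
  ext x; simp only [Finset.mem_Icc, Finset.mem_Ioc, Finset.mem_insert]; omega

private lemma gaussIoc0 (N : ℤ) (h : 0 ≤ N) : 2 * ∑ x ∈ Finset.Ioc (0:ℤ) N, x = N*(N+1) := by
  have h2 := gauss0 N h
  rw [icc_eq_insert_ioc N h, Finset.sum_insert (by simp)] at h2
  linarith

private lemma sum_ioc_shift (c N : ℤ) (f : ℤ → ℤ) :
    ∑ x ∈ Finset.Ioc c (c+N), f x = ∑ j ∈ Finset.Ioc (0:ℤ) N, f (j + c) := by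
  rw [show Finset.Ioc c (c+N) = Finset.Ioc (0+c) (N+c) by rw [zero_add, add_comm N c],
    ← Finset.map_add_right_Ioc, Finset.sum_map]
  rfl

private lemma cardIoc (c N : ℤ) (h : 0 ≤ N) : ((Finset.Ioc c (c+N)).card : ℤ) = N := by
  rw [Int.card_Ioc]; omega

private lemma gaussIoc (c N : ℤ) (h : 0 ≤ N) :
    2 * ∑ x ∈ Finset.Ioc c (c+N), x = N*(2*c+N+1) := by
  have hc : ((Finset.Ioc (0:ℤ) N).card : ℤ) = N := by rw [Int.card_Ioc]; omega
  rw [sum_ioc_shift, Finset.sum_add_distrib, Finset.sum_const, mul_add]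
  rw [gaussIoc0 N h]
  simp only [nsmul_eq_mul]
  rw [show (2:ℤ) * (((Finset.Ioc (0:ℤ) N).card : ℤ) * c) = 2*c*((Finset.Ioc (0:ℤ) N).card : ℤ) by
    ring, hc]
  ring

private lemma floorZ (m a : ℤ) (h : 0 < a) : ⌊(m:ℚ)/(a:ℚ)⌋ = m / a := by
  have h1 : ((a.toNat : ℕ) : ℚ) = (a : ℚ) := by
    rw [← Int.cast_natCast]; norm_cast; omega
  have h2 : ((a.toNat : ℕ) : ℤ) = a := by omega
  rw [← h1, Rat.floor_intCast_div_natCast m a.toNat, h2]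

private lemma ceil_emod (m a : ℤ) (h : 0 < a) :
    a * ⌈(m:ℚ)/(a:ℚ)⌉ = m + (-m) % a := by
  have h1 : ⌈(m:ℚ)/(a:ℚ)⌉ = -((-m)/a) := by
    rw [show (m:ℚ)/(a:ℚ) = -(((-m : ℤ):ℚ)/(a:ℚ)) by push_cast; ring, Int.ceil_neg,
      floorZ (-m) a h]
  have h2 := Int.mul_ediv_add_emod (-m) a
  rw [h1]
  linarith

private lemma ceil_shift (x m b a : ℤ) (h : 0 < a) :
    ⌈((x + m*a) * b : ℚ)/(a:ℚ)⌉ = ⌈(x*b:ℚ)/(a:ℚ)⌉ + m*b := by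
  have ha : (a:ℚ) ≠ 0 := by positivity
  rw [show (((x:ℚ) + (m:ℚ)*(a:ℚ)) * (b:ℚ))/(a:ℚ) = ((x*b:ℚ))/(a:ℚ) + ((m*b : ℤ) : ℚ) from by
    push_cast; field_simp]
  exact Int.ceil_add_intCast _ _

private lemma rs (a e : ℤ) (ha : 0 < a) (hcop : IsCoprime e a) (c : ℤ) :
    2 * ∑ j ∈ Finset.Ioc c (c+a), (j*e) % a = a*(a-1) := by
  obtain ⟨u, v, huv⟩ := hcop
  have key : ∑ j ∈ Finset.Ioc c (c+a), (j*e) % a = ∑ r ∈ Finset.Icc (0:ℤ) (a-1), r := by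
    apply Finset.sum_nbij' (i := fun j => (j*e) % a)
      (j := fun r => c + 1 + ((r*u - (c+1)) % a))
    · intro j hj
      simp only [Finset.mem_Icc]
      constructor
      · exact Int.emod_nonneg _ (by omega)
      · have := Int.emod_lt_of_pos (j*e) ha; omega
    · intro r hr
      simp only [Finset.mem_Ioc]
      have h1 : 0 ≤ (r*u - (c+1)) % a := Int.emod_nonneg _ (by omega)
      have h2 := Int.emod_lt_of_pos (r*u - (c+1)) ha
      omega
    · intro j hj
      simp only [Finset.mem_Ioc] at hj
      have e1 : (j*e % a) ≡ j*e [ZMOD a] := Int.emod_emod_of_dvd _ dvd_rfl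
      have e2 : ((j*e % a)*u - (c+1)) ≡ (j*e*u - (c+1)) [ZMOD a] :=
        (e1.mul_right u).sub_right (c+1)
      have e3 : (j*e*u) ≡ j [ZMOD a] := by
        have hd : a ∣ j - j*e*u := ⟨j*v, by linear_combination j * huv.symm⟩
        exact (Int.ModEq.symm (Int.modEq_iff_dvd.mpr hd)).symm
      have e4 : ((j*e % a)*u - (c+1)) ≡ (j - (c+1)) [ZMOD a] := e2.trans (e3.sub_right (c+1))
      have e5 : ((j*e % a)*u - (c+1)) % a = (j - (c+1)) % a := e4
      have e6 : (j - (c+1)) % a = j - (c+1) := Int.emod_eq_of_lt (by omega) (by omega)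
      omega
    · intro r hr
      simp only [Finset.mem_Icc] at hr
      have e1 : ((r*u - (c+1)) % a) ≡ (r*u - (c+1)) [ZMOD a] := Int.emod_emod_of_dvd _ dvd_rfl
      have e2 : (c + 1 + ((r*u - (c+1)) % a))*e ≡ (c + 1 + (r*u - (c+1)))*e [ZMOD a] :=
        (e1.add_left (c+1)).mul_right e
      have e3 : (c + 1 + (r*u - (c+1)))*e = r*u*e := by ring
      have e4 : (r*u*e) ≡ r [ZMOD a] := by
        have hd : a ∣ r - r*u*e := ⟨r*v, by linear_combination r * huv.symm⟩
        exact (Int.ModEq.symm (Int.modEq_iff_dvd.mpr hd)).symm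
      have e5 : (c + 1 + ((r*u - (c+1)) % a))*e ≡ r [ZMOD a] := by
        rw [e3] at e2; exact e2.trans e4
      have e6 : ((c + 1 + ((r*u - (c+1)) % a))*e) % a = r % a := e5
      have e7 : r % a = r := Int.emod_eq_of_lt (by omega) (by omega)
      omega
    · intro j hj; rfl
  rw [key, gauss0 (a-1) (by omega)]
  ring

private lemma rsmul (a e : ℤ) (ha : 0 < a) (hcop : IsCoprime e a) :
    ∀ (m : ℕ) (c : ℤ), 2 * ∑ j ∈ Finset.Ioc c (c+(m:ℤ)*a), (j*e) % a = (m:ℤ)*(a*(a-1)) := by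
  intro m
  induction m with
  | zero => intro c; simp
  | succ k ih =>
      intro c
      have hsplit : Finset.Ioc c (c+((k:ℤ)+1)*a) =
          Finset.Ioc c (c+(k:ℤ)*a) ∪ Finset.Ioc (c+(k:ℤ)*a) (c+(k:ℤ)*a+a) := by
        rw [Finset.Ioc_union_Ioc_eq_Ioc (by nlinarith) (by nlinarith)]
        congr 1; ring
      have hdisj : Disjoint (Finset.Ioc c (c+(k:ℤ)*a)) (Finset.Ioc (c+(k:ℤ)*a) (c+(k:ℤ)*a+a)) := by
        rw [Finset.disjoint_left]
        intro x hx hx'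
        simp only [Finset.mem_Ioc] at hx hx'
        omega
      push_cast
      rw [hsplit, Finset.sum_union hdisj, mul_add, ih c, rs a e ha hcop (c+(k:ℤ)*a)]
      ring

private lemma ceil_shiftZ (x m b a : ℤ) (h : 0 < a) :
    ⌈((x + m*a : ℤ) : ℚ) * (b:ℚ) / (a:ℚ)⌉ = ⌈((x:ℤ):ℚ) * (b:ℚ) / (a:ℚ)⌉ + m*b := by
  rw [show ((x + m*a : ℤ) : ℚ) = (x:ℚ) + (m:ℚ)*(a:ℚ) by push_cast; ring]
  exact ceil_shift x m b a h

private lemma ceq (an an' bn bn' r : ℤ) (h0 : 0 < an) (h1 : an < an')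
    (hB : bn'*an - bn*an' = 1) (hr1 : -an < r) (hr2 : r ≤ 0) :
    ⌈(r*bn' : ℚ)/(an':ℚ)⌉ = ⌈(r*bn : ℚ)/(an:ℚ)⌉ := by
  have h0' : (0:ℤ) < an' := by omega
  have hanQ : (0:ℚ) < (an:ℚ) := by exact_mod_cast h0
  have hanQ' : (0:ℚ) < (an':ℚ) := by exact_mod_cast h0'
  set c := ⌈(r*bn : ℚ)/(an:ℚ)⌉ with hc
  have hub : (r*bn : ℚ)/(an:ℚ) ≤ (c:ℚ) := Int.le_ceil _
  have hlb : (c:ℚ) - 1 < (r*bn : ℚ)/(an:ℚ) := by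
    have := Int.ceil_lt_add_one ((r*bn : ℚ)/(an:ℚ))
    linarith
  have hubZ : r*bn ≤ c*an := by
    have : (r*bn : ℚ) ≤ (c:ℚ)*(an:ℚ) := by
      rw [div_le_iff₀ hanQ] at hub; exact_mod_cast hub
    exact_mod_cast this
  have hlbZ : an*(c-1) + 1 ≤ r*bn := by
    have h3 : ((c:ℚ)-1) < (r*bn:ℚ)/(an:ℚ) := hlb
    rw [lt_div_iff₀ hanQ] at h3
    have h2 : (c-1)*an < r*bn := by exact_mod_cast h3
    nlinarith
  have hkey : r*bn'*an = r*bn*an' + r := by linear_combination r * hB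
  rw [Int.ceil_eq_iff]
  constructor
  · have hZ : (c-1)*an' < r*bn' := by
      have h4 : an*((c-1)*an') < an*(r*bn') := by nlinarith
      exact lt_of_mul_lt_mul_left h4 (by omega)
    have h5 : ((c:ℤ)-1 : ℚ) < (r*bn':ℚ)/(an':ℚ) := by
      rw [lt_div_iff₀ hanQ']; exact_mod_cast hZ
    push_cast at h5 ⊢; linarith
  · rw [div_le_iff₀ hanQ']
    have : r*bn' ≤ c*an' := by nlinarith
    exact_mod_cast this

private lemma icc_split (A B : ℤ) (h0 : 0 ≤ A) (hAB : A ≤ B) (f : ℤ → ℤ) :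
    ∑ x ∈ Finset.Icc (0:ℤ) B, f x
      = ∑ x ∈ Finset.Icc (0:ℤ) A, f x + ∑ x ∈ Finset.Ioc A B, f x := by
  have hu : Finset.Icc (0:ℤ) A ∪ Finset.Ioc A B = Finset.Icc 0 B := by
    ext x; simp only [Finset.mem_union, Finset.mem_Icc, Finset.mem_Ioc]; omega
  have hd : Disjoint (Finset.Icc (0:ℤ) A) (Finset.Ioc A B) := by
    rw [Finset.disjoint_left]
    intro x hx hx'
    simp only [Finset.mem_Icc] at hx
    simp only [Finset.mem_Ioc] at hx'
    omega
  rw [← hu, Finset.sum_union hd]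

private lemma rangeSum (t : ℤ) : ∀ (m : ℕ),
    2 * ∑ q ∈ Finset.range m, ((q:ℤ)+1-t) = (m:ℤ)*((m:ℤ)+1) - 2*(m:ℤ)*t := by
  intro m
  induction m with
  | zero => simp
  | succ k ih =>
      rw [Finset.sum_range_succ]
      push_cast
      linarith

set_option maxHeartbeats 1000000 in
/-- Σ_{x=0}^{(t−1)·(a_n+α)} Δ′(x) − Σ_{x=0}^{(t−1)·a_n} Δ(x) = −t(t−1)/2, i.e. τ′((t−1)·(a_n+α)+1) − τ((t−1)·a_n+1) = −t(t−1)/2. -/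
theorem stmt_17 (n : ℕ) (hn : 3 ≤ n) (a : Fin (n - 1) → ℤ) (an : ℤ)
    (ha : ∀ i, 2 ≤ a i) (han : 2 ≤ an)
    (hcop : ∀ i j, i ≠ j → IsCoprime (a i) (a j))
    (hcopn : ∀ i, IsCoprime (a i) an)
    (α P : ℤ) (hα : α = ∏ i, a i) (hP : P = α * an)
    (e0 : ℤ) (b : Fin (n - 1) → ℤ) (bn : ℤ)
    (hb : ∀ i, 1 ≤ b i ∧ b i < a i) (hbn : 1 ≤ bn ∧ bn < an)
    (heq : e0 * P + (∑ i, b i * (P / a i)) + bn * α = -1)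
    (Δ : ℤ → ℤ)
    (hΔ : ∀ x : ℤ, Δ x = 1 + |e0| * x -
      ((∑ i, ⌈(x * b i : ℚ) / (a i : ℚ)⌉) + ⌈(x * bn : ℚ) / (an : ℚ)⌉))
    -- the modified Seifert data with last fiber an' = an + α
    (an' P' : ℤ) (han' : an' = an + α) (hP' : P' = α * an')
    (e0' : ℤ) (b' : Fin (n - 1) → ℤ) (bn' : ℤ)
    (hb' : ∀ i, 1 ≤ b' i ∧ b' i < a i) (hbn' : 1 ≤ bn' ∧ bn' < an')
    (heq' : e0' * P' + (∑ i, b' i * (P' / a i)) + bn' * α = -1)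
    (Δ' : ℤ → ℤ)
    (hΔ' : ∀ x : ℤ, Δ' x = 1 + |e0'| * x -
      ((∑ i, ⌈(x * b' i : ℚ) / (a i : ℚ)⌉) + ⌈(x * bn' : ℚ) / (an' : ℚ)⌉))
    (t : ℤ) (ht : 2 * t = ((n : ℤ) - 2) * α - (∑ i, α / a i) + 1) :
    (∑ x ∈ Finset.Icc (0 : ℤ) ((t - 1) * (an + α)), Δ' x) -
      (∑ x ∈ Finset.Icc (0 : ℤ) ((t - 1) * an), Δ x) = -(t * (t - 1) / 2) := by
  classical
  have hai_pos : ∀ i, (0:ℤ) < a i := fun i => by linarith [ha i]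
  set αi : Fin (n-1) → ℤ := fun i => ∏ j ∈ Finset.univ.erase i, a j with hαidef
  have hαia : ∀ i, a i * αi i = α := by
    intro i; rw [hα]; exact Finset.mul_prod_erase _ _ (Finset.mem_univ i)
  have hαi_pos : ∀ i, 0 < αi i := fun i => Finset.prod_pos (fun j _ => hai_pos j)
  have hα_pos : 0 < α := by rw [hα]; exact Finset.prod_pos (fun j _ => hai_pos j)
  have han0 : (0:ℤ) < an := by omega
  have han'0 : 0 < an' := by rw [han']; linarith
  have hana' : an < an' := by rw [han']; linarith
  have hαan' : α < an' := by rw [han']; linarith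
  have i0 : Fin (n-1) := ⟨0, by omega⟩
  have hα2 : 2 ≤ α := by
    have h1 := hαia i0
    nlinarith [hαi_pos i0, ha i0]
  have hcard : ((Finset.univ : Finset (Fin (n-1))).card : ℤ) = (n:ℤ) - 1 := by
    simp only [Finset.card_univ, Fintype.card_fin]
    have : (1:ℕ) ≤ n := by omega
    push_cast [Nat.cast_sub this]
    ring
  have hdiv : ∀ i, α / a i = αi i := by
    intro i; rw [← hαia i]; exact Int.mul_ediv_cancel_left _ (by have := hai_pos i; omega)
  have hPdiv : ∀ i, P / a i = αi i * an := by
    intro i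
    rw [hP, ← hαia i, mul_assoc]
    exact Int.mul_ediv_cancel_left _ (by have := hai_pos i; omega)
  have hPdiv' : ∀ i, P' / a i = αi i * an' := by
    intro i
    rw [hP', ← hαia i, mul_assoc]
    exact Int.mul_ediv_cancel_left _ (by have := hai_pos i; omega)
  set SB := ∑ i, b i * αi i with hSBdef
  set SA := ∑ i, αi i with hSAdef
  have htA : 2*t = ((n:ℤ)-2)*α - SA + 1 := by
    rw [ht, hSAdef]
    congr 2
    exact Finset.sum_congr rfl fun i _ => hdiv i
  have heqc : e0*α*an + SB*an + bn*α = -1 := by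
    have h1 : ∑ i, b i * (P / a i) = SB * an := by
      rw [hSBdef, Finset.sum_mul]
      exact Finset.sum_congr rfl fun i _ => by rw [hPdiv i]; ring
    rw [h1, hP] at heq
    linarith [heq]
  set K : ℤ := -(e0*α + SB) with hKdef
  have hk : an*K = α*bn + 1 := by
    rw [hKdef]; linear_combination -heqc
  have hK1 : 1 ≤ K := by
    by_contra h
    push_neg at h
    have h1 : an*K ≤ 0 := by
      have : K ≤ 0 := by omega
      exact mul_nonpos_of_nonneg_of_nonpos (by omega) this
    have h2 : α ≤ α*bn := le_mul_of_one_le_right (by omega) hbn.1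
    omega
  have hKα : K < α := by
    have h1 : α*bn ≤ α*(an-1) := mul_le_mul_of_nonneg_left (by omega) (by omega)
    have h2 : an*K < an*α := by nlinarith
    exact lt_of_mul_lt_mul_left h2 (by omega)
  -- Uniqueness: identify the primed data
  obtain ⟨hb'b, he0e, hbn'K⟩ : (∀ i, b' i = b i) ∧ e0' = e0 ∧ bn' = bn + K := by
    have heqc' : e0'*α*an' + (∑ i, b' i * αi i)*an' + bn'*α = -1 := by
      have h1 : ∑ i, b' i * (P' / a i) = (∑ i, b' i * αi i) * an' := by
        rw [Finset.sum_mul]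
        exact Finset.sum_congr rfl fun i _ => by rw [hPdiv' i]; ring
      rw [h1, hP'] at heq'
      linarith [heq']
    have hcand : e0*α*an' + SB*an' + (bn+K)*α = -1 := by
      rw [han']
      have hKdef' : K = -(e0*α + SB) := hKdef
      linear_combination heqc - α * hKdef'
    set dn := bn' - (bn + K) with hdn
    have hdiff : (e0'-e0)*(α*an') + (∑ i, (b' i - b i) * αi i)*an' + dn*α = 0 := by
      have h2 : ∑ i, (b' i - b i) * αi i = (∑ i, b' i * αi i) - SB := by
        rw [hSBdef, ← Finset.sum_sub_distrib]
        exact Finset.sum_congr rfl fun i _ => by ring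
      rw [h2, hdn]
      linear_combination heqc' - hcand
    have hd0 : ∀ i, b' i - b i = 0 := by
      intro i
      have hdvd_rest : a i ∣ (b' i - b i) * (αi i * an') := by
        have hsplit : ∑ j, (b' j - b j) * αi j
            = (b' i - b i) * αi i + ∑ j ∈ Finset.univ.erase i, (b' j - b j) * αi j :=
          (Finset.add_sum_erase _ _ (Finset.mem_univ i)).symm
        have heqn : (b' i - b i) * (αi i * an')
            = -((e0'-e0)*(α*an') + (∑ j ∈ Finset.univ.erase i, (b' j - b j) * αi j)*an'
               + dn*α) := by
          rw [hsplit] at hdiff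
          linear_combination hdiff
        rw [heqn]
        have d1 : a i ∣ α := ⟨αi i, (hαia i).symm⟩
        have d2 : a i ∣ (e0'-e0)*(α*an') := (d1.mul_right an').mul_left _
        have d3 : a i ∣ (∑ j ∈ Finset.univ.erase i, (b' j - b j) * αi j)*an' := by
          refine (Finset.dvd_sum fun j hj => ?_).mul_right an'
          have hji : i ∈ Finset.univ.erase j := by
            simp only [Finset.mem_erase] at hj ⊢
            exact ⟨fun h => hj.1 h.symm, Finset.mem_univ i⟩
          exact (Finset.dvd_prod_of_mem a hji).mul_left _
        have d4 : a i ∣ dn*α := (d1.mul_left dn)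
        exact dvd_neg.mpr (dvd_add (dvd_add d2 d3) d4)
      have hcop1 : IsCoprime (a i) (αi i * an') := by
        have c1 : IsCoprime (a i) (αi i) := by
          refine IsCoprime.prod_right fun j hj => ?_
          exact hcop i j (fun h => (Finset.mem_erase.mp hj).1 h.symm)
        have c2 : IsCoprime (a i) an' := by
          have h3 : an' = an + a i * αi i := by rw [han', hαia i]
          rw [h3]
          exact (hcopn i).add_mul_left_right (αi i)
        exact c1.mul_right c2
      have hdvd2 : a i ∣ b' i - b i := hcop1.dvd_of_dvd_mul_right hdvd_rest
      refine Int.eq_zero_of_abs_lt_dvd hdvd2 ?_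
      have h4 := hb i
      have h5 := hb' i
      rw [abs_lt]
      omega
    have h6 : ∑ i, (b' i - b i) * αi i = 0 :=
      Finset.sum_eq_zero fun i _ => by rw [hd0 i]; ring
    rw [h6] at hdiff
    have h7 : α * ((e0'-e0)*an' + dn) = 0 := by linear_combination hdiff
    have h8 : (e0'-e0)*an' + dn = 0 := by
      rcases mul_eq_zero.mp h7 with h | h
      · omega
      · exact h
    have h9 : an' ∣ dn := ⟨-(e0'-e0), by linear_combination h8⟩
    have h10 : dn = 0 := by
      refine Int.eq_zero_of_abs_lt_dvd h9 ?_
      rw [abs_lt]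
      omega
    have hbnK : bn' = bn + K := by omega
    have he0 : e0' = e0 := by
      have h11 : (e0'-e0)*an' = 0 := by omega
      rcases mul_eq_zero.mp h11 with h | h
      · omega
      · omega
    exact ⟨fun i => by linarith [hd0 i], he0, hbnK⟩
  have hanK : an'*K = α*bn' + 1 := by
    rw [han', hbn'K]; linear_combination hk
  have hBez : bn'*an - bn*an' = 1 := by
    rw [han', hbn'K]; linear_combination hk
  have hSB_pos : 0 < SB := by
    rw [hSBdef]
    refine Finset.sum_pos (fun i _ => ?_) ⟨i0, Finset.mem_univ i0⟩
    have h1 := hαi_pos i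
    have h2 := (hb i).1
    nlinarith
  have he0neg : e0 < 0 := by
    by_contra h
    push_neg at h
    have h1 : 0 ≤ e0*α*an := mul_nonneg (mul_nonneg h (le_of_lt hα_pos)) (le_of_lt han0)
    have h2 : 0 < SB*an := mul_pos hSB_pos han0
    have h3 : 0 < bn*α := mul_pos (by omega) hα_pos
    omega
  have habs : |e0| = -e0 := abs_of_neg he0neg
  have hΔc : ∀ x : ℤ, Δ x = 1 + (-e0) * x -
      ((∑ i, ⌈(x * b i : ℚ) / (a i : ℚ)⌉) + ⌈(x * bn : ℚ) / (an : ℚ)⌉) := by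
    intro x; rw [hΔ x, habs]
  have hΔ'c : ∀ x : ℤ, Δ' x = 1 + (-e0) * x -
      ((∑ i, ⌈(x * b i : ℚ) / (a i : ℚ)⌉) + ⌈(x * bn' : ℚ) / (an' : ℚ)⌉) := by
    intro x
    rw [hΔ' x, he0e, habs]
    congr 2
    exact Finset.sum_congr rfl fun i _ => by rw [hb'b i]
  -- coprimality facts
  have hcop_bi : ∀ i, IsCoprime (-(b i)) (a i) := by
    intro i
    have hdvd : a i ∣ b i * (αi i * an) + 1 := by
      have hsplit : SB = b i * αi i + ∑ j ∈ Finset.univ.erase i, b j * αi j :=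
        (Finset.add_sum_erase _ _ (Finset.mem_univ i)).symm
      have heqn : b i * (αi i * an) + 1
          = -(e0*α*an + (∑ j ∈ Finset.univ.erase i, b j * αi j)*an + bn*α) := by
        rw [hsplit] at heqc
        linear_combination heqc
      rw [heqn]
      have d1 : a i ∣ α := ⟨αi i, (hαia i).symm⟩
      have d2 : a i ∣ e0*α*an := ((d1.mul_left e0).mul_right an)
      have d3 : a i ∣ (∑ j ∈ Finset.univ.erase i, b j * αi j)*an := by
        refine (Finset.dvd_sum fun j hj => ?_).mul_right an
        have hji : i ∈ Finset.univ.erase j := by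
          simp only [Finset.mem_erase] at hj ⊢
          exact ⟨fun h => hj.1 h.symm, Finset.mem_univ i⟩
        exact (Finset.dvd_prod_of_mem a hji).mul_left _
      have d4 : a i ∣ bn*α := d1.mul_left bn
      exact dvd_neg.mpr (dvd_add (dvd_add d2 d3) d4)
    obtain ⟨w, hw⟩ := hdvd
    exact ⟨αi i * an, w, by linear_combination -hw⟩
  have hcop_bn' : IsCoprime (-bn') an' := ⟨α, K, by linear_combination hanK⟩
  have hcopsym : IsCoprime an' bn' := ⟨K, -α, by linear_combination hanK⟩
  -- the matching lemma
  have MATCH : ∀ q r : ℤ, -an < r → r ≤ 0 → Δ' (q*an' + r) = Δ (q*an + r) := by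
    intro q r h1 h2
    rw [hΔ'c, hΔc]
    have hsum : ∀ i, ⌈((q*an'+r : ℤ) : ℚ) * ((b i : ℤ):ℚ) / ((a i : ℤ):ℚ)⌉
        = ⌈((q*an+r : ℤ):ℚ) * ((b i:ℤ):ℚ) / ((a i:ℤ):ℚ)⌉ + (q*αi i)*(b i) := by
      intro i
      have hx : q*an' + r = (q*an+r) + (q*αi i)*(a i) := by
        rw [han', ← hαia i]; ring
      rw [hx]
      exact ceil_shiftZ (q*an+r) (q*αi i) (b i) (a i) (hai_pos i)
    have hswap : ∑ i, (q*αi i)*(b i) = q * SB := by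
      rw [hSBdef, Finset.mul_sum]
      exact Finset.sum_congr rfl fun i _ => by ring
    have hA : (∑ i, ⌈((q*an'+r : ℤ):ℚ) * ((b i:ℤ):ℚ) / ((a i:ℤ):ℚ)⌉)
        = (∑ i, ⌈((q*an+r : ℤ):ℚ) * ((b i:ℤ):ℚ) / ((a i:ℤ):ℚ)⌉) + q*SB := by
      rw [Finset.sum_congr rfl (fun i _ => hsum i), Finset.sum_add_distrib, hswap]
    have hB : ⌈((q*an'+r : ℤ):ℚ) * (bn':ℚ) / (an':ℚ)⌉
        = ⌈((r:ℤ):ℚ) * (bn:ℚ) / (an:ℚ)⌉ + q*bn' := by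
      rw [show q*an' + r = r + q*an' by ring]
      rw [ceil_shiftZ r q bn' an' han'0]
      rw [ceq an an' bn bn' r han0 hana' hBez h1 h2]
    have hC : ⌈((q*an+r : ℤ):ℚ) * (bn:ℚ) / (an:ℚ)⌉
        = ⌈((r:ℤ):ℚ) * (bn:ℚ) / (an:ℚ)⌉ + q*bn := by
      rw [show q*an + r = r + q*an by ring]
      exact ceil_shiftZ r q bn an han0
    rw [hA, hB, hC, han', hbn'K]
    linear_combination (-q)*hKdef
  -- the window sum
  have FZ : ∀ s : ℤ, ∑ x ∈ Finset.Ioc (s*an') (s*an'+α), Δ' x = s + 1 - t := by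
    intro s
    set C := s*an' with hC
    have hαbn'mod : (α*bn') % an' = an' - 1 := by
      rw [show α*bn' = (an' - 1) + an'*(K-1) by linear_combination -hanK]
      rw [Int.add_mul_emod_self_left]
      exact Int.emod_eq_of_lt (by omega) (by omega)
    have hkey0 : ∀ m : ℤ, 0 ≤ m → m < α → (m*bn') % an' ≠ an' - 1 := by
      intro m hm1 hm2 hcon
      have d1 : an' ∣ α*bn' - (an'-1) := Int.dvd_self_sub_of_emod_eq hαbn'mod
      have d2 : an' ∣ m*bn' - (an'-1) := Int.dvd_self_sub_of_emod_eq hcon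
      have d3 : an' ∣ (α - m) * bn' := by
        have h4 := dvd_sub d1 d2
        rw [show α*bn' - (an'-1) - (m*bn' - (an'-1)) = (α-m)*bn' by ring] at h4
        exact h4
      have d5 : an' ∣ (α - m) := hcopsym.dvd_of_dvd_mul_right d3
      have := Int.le_of_dvd (by omega) d5
      omega
    have pairfact : ∀ k : ℤ, 0 < k → k < α → (k*bn') % an' + ((α-k)*bn') % an' = an' - 1 := by
      intro k hk1 hk2
      obtain ⟨q1, hq1⟩ : an' ∣ k*bn' - (k*bn') % an' := Int.dvd_self_sub_of_emod_eq rfl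
      obtain ⟨q2, hq2⟩ : an' ∣ (α-k)*bn' - ((α-k)*bn') % an' := Int.dvd_self_sub_of_emod_eq rfl
      have big : an' ∣ ((k*bn') % an' + ((α-k)*bn') % an') - (an'-1) :=
        ⟨-q1 - q2 + K - 1, by linear_combination -hq1 - hq2 - hanK⟩
      have b1 := Int.emod_nonneg (k*bn') (by omega : an' ≠ 0)
      have b2 := Int.emod_lt_of_pos (k*bn') han'0
      have b3 := Int.emod_nonneg ((α-k)*bn') (by omega : an' ≠ 0)
      have b4 := Int.emod_lt_of_pos ((α-k)*bn') han'0
      have h5 := Int.eq_zero_of_abs_lt_dvd big (by rw [abs_lt]; omega)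
      omega
    have stepG1 : ∀ j ∈ Finset.Ioc (0:ℤ) α, (j*(-bn')) % an' = ((α-j)*bn') % an' + 1 := by
      intro j hj
      rw [Finset.mem_Ioc] at hj
      have hne := hkey0 (α-j) (by omega) (by omega)
      obtain ⟨q1, hq1⟩ : an' ∣ j*(-bn') - (j*(-bn')) % an' := Int.dvd_self_sub_of_emod_eq rfl
      obtain ⟨q2, hq2⟩ : an' ∣ (α-j)*bn' - ((α-j)*bn') % an' := Int.dvd_self_sub_of_emod_eq rfl
      have big : an' ∣ (j*(-bn')) % an' - (((α-j)*bn') % an' + 1) :=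
        ⟨-q1 + q2 - K, by linear_combination -hq1 + hq2 + hanK⟩
      have b1 := Int.emod_nonneg (j*(-bn')) (by omega : an' ≠ 0)
      have b2 := Int.emod_lt_of_pos (j*(-bn')) han'0
      have b3 := Int.emod_nonneg ((α-j)*bn') (by omega : an' ≠ 0)
      have b4 := Int.emod_lt_of_pos ((α-j)*bn') han'0
      have h5 := Int.eq_zero_of_abs_lt_dvd big (by rw [abs_lt]; omega)
      omega
    have hcard0 : ((Finset.Ioc (0:ℤ) α).card : ℤ) = α := by rw [Int.card_Ioc]; omega
    have hG : 2 * ∑ j ∈ Finset.Ioc (0:ℤ) α, (j*(-bn')) % an' = 2*α + (α-1)*(an'-1) := by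
      rw [Finset.sum_congr rfl stepG1, Finset.sum_add_distrib, Finset.sum_const]
      have hre : ∑ j ∈ Finset.Ioc (0:ℤ) α, ((α-j)*bn') % an'
          = ∑ k ∈ Finset.Ico (0:ℤ) α, (k*bn') % an' := by
        apply Finset.sum_nbij' (i := fun j => α - j) (j := fun k => α - k)
        · intro x hx; rw [Finset.mem_Ioc] at hx; rw [Finset.mem_Ico]; omega
        · intro x hx; rw [Finset.mem_Ico] at hx; rw [Finset.mem_Ioc]; omega
        · intro x _; ring
        · intro x _; ring
        · intro x _; rfl
      have hIco : Finset.Ico (0:ℤ) α = insert 0 (Finset.Ioo 0 α) := by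
        ext x; simp only [Finset.mem_Ico, Finset.mem_Ioo, Finset.mem_insert]; omega
      have hrefl : ∑ k ∈ Finset.Ioo (0:ℤ) α, (k*bn') % an'
          = ∑ k ∈ Finset.Ioo (0:ℤ) α, ((α-k)*bn') % an' := by
        apply Finset.sum_nbij' (i := fun k => α - k) (j := fun k => α - k)
        · intro x hx; rw [Finset.mem_Ioo] at hx ⊢; omega
        · intro x hx; rw [Finset.mem_Ioo] at hx ⊢; omega
        · intro x _; ring
        · intro x _; ring
        · intro x _
          congr 1
          ring
      have hcardo : ((Finset.Ioo (0:ℤ) α).card : ℤ) = α - 1 := by rw [Int.card_Ioo]; omega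
      have hH : 2 * ∑ k ∈ Finset.Ioo (0:ℤ) α, (k*bn') % an' = (α-1)*(an'-1) := by
        have h2 : ∑ k ∈ Finset.Ioo (0:ℤ) α, ((k*bn') % an' + ((α-k)*bn') % an')
            = (∑ k ∈ Finset.Ioo (0:ℤ) α, (k*bn') % an')
              + ∑ k ∈ Finset.Ioo (0:ℤ) α, ((α-k)*bn') % an' := Finset.sum_add_distrib
        have hpair : ∑ k ∈ Finset.Ioo (0:ℤ) α, ((k*bn') % an' + ((α-k)*bn') % an')
            = (α-1)*(an'-1) := by
          have hc : ∀ k ∈ Finset.Ioo (0:ℤ) α, (k*bn') % an' + ((α-k)*bn') % an' = an' - 1 := by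
            intro k hk
            rw [Finset.mem_Ioo] at hk
            exact pairfact k hk.1 hk.2
          rw [Finset.sum_congr rfl hc, Finset.sum_const, nsmul_eq_mul, hcardo]
        linarith [hrefl, hpair, h2]
      have hzero : ((0:ℤ)*bn') % an' = 0 := by simp
      rw [hre, hIco, Finset.sum_insert (by simp), hzero, nsmul_eq_mul, mul_one, hcard0]
      linarith [hH]
    -- the i-th ceiling sums
    have hDi : ∀ i, 2 * ∑ x ∈ Finset.Ioc C (C+α), ⌈((x:ℤ):ℚ) * ((b i:ℤ):ℚ) / ((a i:ℤ):ℚ)⌉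
        = b i * αi i * (2*C+α+1) + αi i * (a i - 1) := by
      intro i
      have hmod : ∀ x : ℤ, (a i) * ⌈((x:ℤ):ℚ) * ((b i:ℤ):ℚ) / ((a i:ℤ):ℚ)⌉
          = x * b i + (x*(-(b i))) % (a i) := by
        intro x
        have h6 := ceil_emod (x * b i) (a i) (hai_pos i)
        rw [show ((x * b i : ℤ):ℚ) = ((x:ℤ):ℚ) * ((b i:ℤ):ℚ) by push_cast; ring] at h6
        rw [h6, show -(x * b i) = x*(-(b i)) by ring]
      have hsm : (a i) * ∑ x ∈ Finset.Ioc C (C+α), ⌈((x:ℤ):ℚ) * ((b i:ℤ):ℚ) / ((a i:ℤ):ℚ)⌉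
          = (∑ x ∈ Finset.Ioc C (C+α), x * b i)
            + ∑ x ∈ Finset.Ioc C (C+α), (x*(-(b i))) % a i := by
        rw [Finset.mul_sum, Finset.sum_congr rfl fun x _ => hmod x, Finset.sum_add_distrib]
      have hrs : 2 * ∑ x ∈ Finset.Ioc C (C+α), (x*(-(b i))) % a i
          = αi i * (a i * (a i - 1)) := by
        have hm := rsmul (a i) (-(b i)) (hai_pos i) (hcop_bi i) (αi i).toNat C
        have hcast : (((αi i).toNat : ℕ) : ℤ) = αi i := Int.toNat_of_nonneg (le_of_lt (hαi_pos i))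
        rw [hcast, show αi i * a i = α by rw [← hαia i]; ring] at hm
        rw [hm]
      have hXb : 2 * ∑ x ∈ Finset.Ioc C (C+α), x * b i = b i * (α*(2*C+α+1)) := by
        rw [← Finset.sum_mul]
        have h7 := gaussIoc C α (le_of_lt hα_pos)
        linear_combination (b i) * h7
      have he4 : α = a i * αi i := (hαia i).symm
      have hfin : (a i) * (2 * ∑ x ∈ Finset.Ioc C (C+α), ⌈((x:ℤ):ℚ) * ((b i:ℤ):ℚ) / ((a i:ℤ):ℚ)⌉)
          = (a i) * (b i * αi i * (2*C+α+1) + αi i * (a i - 1)) := by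
        linear_combination 2*hsm + hXb + hrs + (b i*(2*C+α+1))*he4
      exact mul_left_cancel₀ (by have := hai_pos i; omega) hfin
    -- the an'-ceiling sum
    have hE : 2 * ∑ x ∈ Finset.Ioc C (C+α), ⌈((x:ℤ):ℚ) * ((bn':ℤ):ℚ) / ((an':ℤ):ℚ)⌉
        = 2*α*s*bn' + ((α+1)*K + α - 1) := by
      have hshift : ∀ x : ℤ, ⌈((x:ℤ):ℚ) * ((bn':ℤ):ℚ) / ((an':ℤ):ℚ)⌉
          = ⌈((x - C : ℤ):ℚ) * ((bn':ℤ):ℚ) / ((an':ℤ):ℚ)⌉ + s*bn' := by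
        intro x
        conv_lhs => rw [show x = (x - C) + s*an' by rw [hC]; ring]
        exact ceil_shiftZ (x-C) s bn' an' han'0
      rw [Finset.sum_congr rfl (fun x _ => hshift x), Finset.sum_add_distrib, Finset.sum_const]
      have hre2 : ∑ x ∈ Finset.Ioc C (C+α), ⌈((x - C : ℤ):ℚ) * ((bn':ℤ):ℚ) / ((an':ℤ):ℚ)⌉
          = ∑ j ∈ Finset.Ioc (0:ℤ) α, ⌈((j:ℤ):ℚ) * ((bn':ℤ):ℚ) / ((an':ℤ):ℚ)⌉ := by
        rw [sum_ioc_shift C α (fun y => ⌈((y - C : ℤ):ℚ) * ((bn':ℤ):ℚ) / ((an':ℤ):ℚ)⌉)]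
        exact Finset.sum_congr rfl fun j _ => by simp
      rw [hre2]
      have hmod2 : an' * ∑ j ∈ Finset.Ioc (0:ℤ) α, ⌈((j:ℤ):ℚ) * ((bn':ℤ):ℚ) / ((an':ℤ):ℚ)⌉
          = (∑ j ∈ Finset.Ioc (0:ℤ) α, j * bn')
            + ∑ j ∈ Finset.Ioc (0:ℤ) α, (j*(-bn')) % an' := by
        have hmodx : ∀ j : ℤ, an' * ⌈((j:ℤ):ℚ) * ((bn':ℤ):ℚ) / ((an':ℤ):ℚ)⌉
            = j * bn' + (j*(-bn')) % an' := by
          intro j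
          have h6 := ceil_emod (j * bn') an' han'0
          rw [show ((j * bn' : ℤ):ℚ) = ((j:ℤ):ℚ) * ((bn':ℤ):ℚ) by push_cast; ring] at h6
          rw [h6, show -(j * bn') = j*(-bn') by ring]
        rw [Finset.mul_sum, Finset.sum_congr rfl fun j _ => hmodx j, Finset.sum_add_distrib]
      have hSj : 2 * ∑ j ∈ Finset.Ioc (0:ℤ) α, j * bn' = α*(α+1)*bn' := by
        rw [← Finset.sum_mul]
        have h7 := gaussIoc0 α (le_of_lt hα_pos)
        linear_combination bn' * h7
      have h2E0 : 2 * ∑ j ∈ Finset.Ioc (0:ℤ) α, ⌈((j:ℤ):ℚ) * ((bn':ℤ):ℚ) / ((an':ℤ):ℚ)⌉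
          = (α+1)*K + α - 1 := by
        have hfin : an' * (2 * ∑ j ∈ Finset.Ioc (0:ℤ) α, ⌈((j:ℤ):ℚ) * ((bn':ℤ):ℚ) / ((an':ℤ):ℚ)⌉)
            = an' * ((α+1)*K + α - 1) := by
          linear_combination 2*hmod2 + hSj + hG - (α+1)*hanK
        exact mul_left_cancel₀ (by omega) hfin
      rw [nsmul_eq_mul, cardIoc C α (le_of_lt hα_pos)]
      linarith [h2E0]
    -- assembly
    have hcardW : ((Finset.Ioc C (C+α)).card : ℤ) = α := cardIoc C α (le_of_lt hα_pos)
    have hT : ∑ x ∈ Finset.Ioc C (C+α), Δ' x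
        = (∑ x ∈ Finset.Ioc C (C+α), (1:ℤ)) + (-e0) * (∑ x ∈ Finset.Ioc C (C+α), x)
          - ((∑ i, ∑ x ∈ Finset.Ioc C (C+α), ⌈((x:ℤ):ℚ) * ((b i:ℤ):ℚ) / ((a i:ℤ):ℚ)⌉)
             + ∑ x ∈ Finset.Ioc C (C+α), ⌈((x:ℤ):ℚ) * ((bn':ℤ):ℚ) / ((an':ℤ):ℚ)⌉) := by
      rw [Finset.sum_congr rfl fun x _ => hΔ'c x, Finset.sum_sub_distrib,
        Finset.sum_add_distrib, Finset.sum_add_distrib, ← Finset.mul_sum, Finset.sum_comm]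
    have hone : ∑ x ∈ Finset.Ioc C (C+α), (1:ℤ) = α := by
      rw [Finset.sum_const, nsmul_eq_mul, mul_one, hcardW]
    have hD : 2 * ∑ i, ∑ x ∈ Finset.Ioc C (C+α), ⌈((x:ℤ):ℚ) * ((b i:ℤ):ℚ) / ((a i:ℤ):ℚ)⌉
        = (2*C+α+1)*SB + (((n:ℤ)-1)*α - SA) := by
      rw [Finset.mul_sum, Finset.sum_congr rfl fun i _ => hDi i, Finset.sum_add_distrib]
      have p1 : ∑ i, b i * αi i * (2*C+α+1) = (2*C+α+1)*SB := by
        rw [hSBdef, Finset.mul_sum]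
        exact Finset.sum_congr rfl fun i _ => by ring
      have p2 : ∑ i, αi i * (a i - 1) = ((n:ℤ)-1)*α - SA := by
        have hterm : ∀ i ∈ (Finset.univ : Finset (Fin (n-1))), αi i * (a i - 1) = α - αi i := by
          intro i _
          have := hαia i
          linear_combination this
        rw [Finset.sum_congr rfl hterm, Finset.sum_sub_distrib, Finset.sum_const,
          nsmul_eq_mul, hcard, hSAdef]
      rw [p1, p2]
    have hX := gaussIoc C α (le_of_lt hα_pos)
    have h2T : 2 * ∑ x ∈ Finset.Ioc C (C+α), Δ' x = 2*(s+1-t) := by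
      rw [hT, hone]
      linear_combination (-e0)*hX - hD - hE + htA - (2*C+α+1)*hKdef + 2*K*hC + 2*s*hanK
    linarith [h2T]
  -- the induction
  have IND : ∀ s : ℕ, (∑ x ∈ Finset.Icc (0:ℤ) ((s:ℤ)*an'), Δ' x)
      - (∑ x ∈ Finset.Icc (0:ℤ) ((s:ℤ)*an), Δ x) = ∑ q ∈ Finset.range s, ((q:ℤ)+1-t) := by
    intro s
    induction s with
    | zero =>
        simp only [Nat.cast_zero, zero_mul, Finset.range_zero, Finset.sum_empty]
        rw [Finset.Icc_self, Finset.sum_singleton, Finset.sum_singleton]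
        rw [hΔ'c 0, hΔc 0]
        simp
    | succ k ih =>
        have hsc : ((k+1:ℕ):ℤ) = (k:ℤ)+1 := by push_cast; ring
        rw [hsc, Finset.sum_range_succ]
        have hk0 : (0:ℤ) ≤ (k:ℤ) := by positivity
        have hs1 : ∑ x ∈ Finset.Icc (0:ℤ) (((k:ℤ)+1)*an'), Δ' x
            = ∑ x ∈ Finset.Icc (0:ℤ) ((k:ℤ)*an'), Δ' x
              + ∑ x ∈ Finset.Ioc ((k:ℤ)*an') (((k:ℤ)+1)*an'), Δ' x :=
          icc_split ((k:ℤ)*an') (((k:ℤ)+1)*an')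
            (mul_nonneg hk0 (le_of_lt han'0)) (by nlinarith [han'0]) Δ'
        have hs2 : ∑ x ∈ Finset.Icc (0:ℤ) (((k:ℤ)+1)*an), Δ x
            = ∑ x ∈ Finset.Icc (0:ℤ) ((k:ℤ)*an), Δ x
              + ∑ x ∈ Finset.Ioc ((k:ℤ)*an) (((k:ℤ)+1)*an), Δ x :=
          icc_split ((k:ℤ)*an) (((k:ℤ)+1)*an)
            (mul_nonneg hk0 (le_of_lt han0)) (by nlinarith [han0]) Δ
        rw [hs1, hs2]
        have hstep : (∑ x ∈ Finset.Ioc ((k:ℤ)*an') (((k:ℤ)+1)*an'), Δ' x)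
            - (∑ x ∈ Finset.Ioc ((k:ℤ)*an) (((k:ℤ)+1)*an), Δ x) = (k:ℤ)+1-t := by
          have hsp : Finset.Ioc ((k:ℤ)*an') (((k:ℤ)+1)*an')
              = Finset.Ioc ((k:ℤ)*an') ((k:ℤ)*an'+α)
                ∪ Finset.Ioc ((k:ℤ)*an'+α) (((k:ℤ)+1)*an') := by
            rw [Finset.Ioc_union_Ioc_eq_Ioc (by linarith) (by nlinarith [hαan'])]
          have hdisj : Disjoint (Finset.Ioc ((k:ℤ)*an') ((k:ℤ)*an'+α))
              (Finset.Ioc ((k:ℤ)*an'+α) (((k:ℤ)+1)*an')) := by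
            rw [Finset.disjoint_left]
            intro x hx hx'
            rw [Finset.mem_Ioc] at hx hx'
            omega
          rw [hsp, Finset.sum_union hdisj, FZ (k:ℤ)]
          have hmap : ∑ x ∈ Finset.Ioc ((k:ℤ)*an'+α) (((k:ℤ)+1)*an'), Δ' x
              = ∑ x ∈ Finset.Ioc ((k:ℤ)*an) (((k:ℤ)+1)*an), Δ' (x + ((k:ℤ)+1)*α) := by
            rw [show Finset.Ioc ((k:ℤ)*an'+α) (((k:ℤ)+1)*an')
                = (Finset.Ioc ((k:ℤ)*an) (((k:ℤ)+1)*an)).map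
                    (addRightEmbedding (((k:ℤ)+1)*α)) by
              rw [Finset.map_add_right_Ioc, han']
              congr 1 <;> ring]
            rw [Finset.sum_map]
            rfl
          have hmatch : ∀ x ∈ Finset.Ioc ((k:ℤ)*an) (((k:ℤ)+1)*an),
              Δ' (x + ((k:ℤ)+1)*α) = Δ x := by
            intro x hx
            rw [Finset.mem_Ioc] at hx
            have hr : ((k:ℤ)+1)*an - an = (k:ℤ)*an := by ring
            have h1 : x + ((k:ℤ)+1)*α = ((k:ℤ)+1)*an' + (x - ((k:ℤ)+1)*an) := by
              rw [han']; ring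
            have h2 : ((k:ℤ)+1)*an + (x - ((k:ℤ)+1)*an) = x := by ring
            calc Δ' (x + ((k:ℤ)+1)*α)
                = Δ' (((k:ℤ)+1)*an' + (x - ((k:ℤ)+1)*an)) := by rw [h1]
              _ = Δ (((k:ℤ)+1)*an + (x - ((k:ℤ)+1)*an)) :=
                  MATCH ((k:ℤ)+1) (x - ((k:ℤ)+1)*an)
                    (by linarith [hx.1]) (by linarith [hx.2])
              _ = Δ x := by rw [h2]
          rw [hmap, Finset.sum_congr rfl hmatch]
          ring
        linarith [ih, hstep]
  -- conclusion
  have ht1 : 1 ≤ t := by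
    have hsum : 2*SA ≤ ((n:ℤ)-1)*α := by
      have h1 : ∀ i ∈ (Finset.univ : Finset (Fin (n-1))), 2 * αi i ≤ α := by
        intro i _
        calc 2 * αi i ≤ a i * αi i := by nlinarith [hαi_pos i, ha i]
        _ = α := hαia i
      calc 2*SA = ∑ i, 2 * αi i := by rw [hSAdef, Finset.mul_sum]
      _ ≤ ∑ _i : Fin (n-1), α := Finset.sum_le_sum h1
      _ = ((n:ℤ)-1)*α := by rw [Finset.sum_const, nsmul_eq_mul, hcard]
    have hn3 : (3:ℤ) ≤ (n:ℤ) := by exact_mod_cast hn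
    nlinarith
  obtain ⟨s, hs⟩ : ∃ s : ℕ, (s:ℤ) = t - 1 := ⟨(t-1).toNat, Int.toNat_of_nonneg (by omega)⟩
  have hmain := IND s
  rw [hs] at hmain
  rw [show (t-1)*(an+α) = (t-1)*an' by rw [han']] 
  rw [hmain]
  have h2 := rangeSum t s
  rw [hs] at h2
  have heven : ∃ w, t*(t-1) = 2*w := by
    rcases Int.even_mul_succ_self (t-1) with ⟨w, hw⟩
    exact ⟨w, by rw [show t*(t-1) = (t-1)*(t-1+1) by ring, hw]; ring⟩
  obtain ⟨w, hw⟩ := heven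
  have : ∑ q ∈ Finset.range s, ((q:ℤ)+1-t) = -w := by linarith
  rw [this, hw]
  omega
end

section
/- The minima over the nonnegative integers of the two τ-sequences exist and satisfy min_{x ≥ 0} τ'(x) − min_{x ≥ 0} τ(x) = −t(t−1)/2 = −(1/8)·(((n−2)·α − Σ_{i=1}^{n−1} α/a_i)² − 1). (This is the identity which, via the d-invariant formula for Seifert homology spheres, implies that the d-invariants of Σ(a_1,…,a_n) and Σ(a_1,…,a_{n−1},a_n+α) are equal.) -/
namespace Stmt18Aux

lemma ceil_int (a b : ℤ) (hb : 0 < b) : ⌈(a : ℚ) / (b : ℚ)⌉ = -(-a / b) := by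
  have hbn : ((b.toNat : ℕ) : ℤ) = b := Int.toNat_of_nonneg hb.le
  have h1 : ((a:ℚ) / (b:ℚ)) = -((((-a : ℤ)) : ℚ) / ((b.toNat : ℕ) : ℚ)) := by
    have : ((b.toNat : ℕ) : ℚ) = (b : ℚ) := by exact_mod_cast congrArg (fun z : ℤ => (z : ℚ)) hbn
    rw [this]
    push_cast
    ring
  rw [h1, Int.ceil_neg, Rat.floor_intCast_div_natCast, hbn]

-- division uniqueness helper
lemma ediv_eq_of (a b q r : ℤ) (hb : 0 < b) (h : a = b * q + r) (h0 : 0 ≤ r) (h1 : r < b) :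
    a / b = q := by
  have h2 := Int.mul_ediv_add_emod a b
  have h3 := Int.emod_nonneg a (ne_of_gt hb)
  have h4 := Int.emod_lt_of_pos a hb
  -- b*(a/b) + a%b = b*q + r  with both remainders in [0,b)
  have h5 : b * (a / b - q) = r - a % b := by linarith [h2]
  have h6 : a / b - q = 0 := by
    by_contra hne
    rcases lt_or_gt_of_ne hne with hlt | hgt
    · have : b * (a / b - q) ≤ -b := by nlinarith
      omega
    · have : b ≤ b * (a / b - q) := by nlinarith
      omega
  omega


/-- ceiling of v/α for positive α, as integer operation -/
def pq (α v : ℤ) : ℤ := -(-v / α)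

lemma pq_add_mul (α v m : ℤ) (hα : 0 < α) : pq α (v + m * α) = pq α v + m := by
  unfold pq
  have : -(v + m * α) = -v + (-m) * α := by ring
  rw [this, Int.add_mul_ediv_right _ _ (ne_of_gt hα)]
  ring

lemma pq_mono (α v w : ℤ) (hα : 0 < α) (h : v ≤ w) : pq α v ≤ pq α w := by
  unfold pq
  have := Int.ediv_le_ediv hα (by linarith : -w ≤ -v)
  omega

lemma pq_nonpos (α v : ℤ) (hα : 0 < α) (h : v ≤ 0) : pq α v ≤ 0 := by
  unfold pq
  have : 0 ≤ -v / α := Int.ediv_nonneg (by linarith) hα.le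
  omega

lemma pq_pos_iff (α v : ℤ) (hα : 0 < α) : 1 ≤ pq α v ↔ 1 ≤ v := by
  unfold pq
  constructor
  · intro h
    by_contra hv
    have : 0 ≤ -v / α := Int.ediv_nonneg (by omega) hα.le
    omega
  · intro h
    have : -v / α < 0 := by
      rw [Int.ediv_lt_iff_lt_mul hα]
      omega
    omega

lemma pq_succ (α v : ℤ) (hα : 0 < α) :
    pq α (v + 1) = pq α v + (if α ∣ v then 1 else 0) := by
  have h2 := Int.mul_ediv_add_emod (-v) α
  have h3 := Int.emod_nonneg (-v) (ne_of_gt hα)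
  have h4 := Int.emod_lt_of_pos (-v) hα
  have hdvd : α ∣ v ↔ (-v) % α = 0 := by
    rw [← Int.dvd_neg]
    exact ⟨fun h => Int.emod_eq_zero_of_dvd h, fun h => Int.dvd_of_emod_eq_zero h⟩
  by_cases hd : α ∣ v
  · rw [if_pos hd]
    have hr : (-v) % α = 0 := hdvd.mp hd
    have : -(v + 1) / α = (-v / α) - 1 :=
      ediv_eq_of _ _ _ (α - 1) hα (by linarith) (by omega) (by omega)
    unfold pq
    omega
  · rw [if_neg hd]
    have hr : 1 ≤ (-v) % α := by
      rcases eq_or_lt_of_le h3 with h | h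
      · exact absurd (hdvd.mpr h.symm) hd
      · omega
    have : -(v + 1) / α = -v / α :=
      ediv_eq_of _ _ _ ((-v) % α - 1) hα (by linarith) (by omega) (by omega)
    unfold pq
    omega

/-- ℤ-interval sum: top split -/
lemma sum_Ico_succ (f : ℤ → ℤ) (a b : ℤ) (h : a ≤ b) :
    ∑ x ∈ Finset.Ico a (b + 1), f x = (∑ x ∈ Finset.Ico a b, f x) + f b := by
  have : Finset.Ico a (b + 1) = insert b (Finset.Ico a b) := by
    ext x
    simp only [Finset.mem_Ico, Finset.mem_insert]
    omega
  rw [this, Finset.sum_insert (by simp)]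
  ring

lemma sum_Ico_split (f : ℤ → ℤ) (a b c : ℤ) (hab : a ≤ b) (hbc : b ≤ c) :
    ∑ x ∈ Finset.Ico a c, f x =
      (∑ x ∈ Finset.Ico a b, f x) + ∑ x ∈ Finset.Ico b c, f x := by
  rw [← Finset.Ico_union_Ico_eq_Ico hab hbc,
    Finset.sum_union (Finset.Ico_disjoint_Ico_consecutive a b c)]

lemma gauss (t : ℤ) (ht : 0 ≤ t) :
    2 * (∑ ℓ ∈ Finset.Ico (0 : ℤ) t, ℓ) = t * (t - 1) := by
  refine Int.le_induction
    (motive := fun s _ => 2 * (∑ ℓ ∈ Finset.Ico (0 : ℤ) s, ℓ) = s * (s - 1)) ?_ ?_ t ht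
  · norm_num
  · intro n hn ih
    rw [sum_Ico_succ _ _ _ hn]
    linear_combination ih

lemma G1 (t T R : ℤ) (ht : 0 ≤ t) (h2T : 2 * T = t * (t - 1)) (hR : t ≤ R) :
    ∑ ℓ ∈ Finset.Ico (0 : ℤ) R, max 0 (t - ℓ) = T + t := by
  rw [sum_Ico_split _ 0 t R ht hR]
  have h1 : ∑ ℓ ∈ Finset.Ico (0 : ℤ) t, max 0 (t - ℓ) = ∑ ℓ ∈ Finset.Ico (0 : ℤ) t, (t - ℓ) := by
    apply Finset.sum_congr rfl
    intro x hx
    simp only [Finset.mem_Ico] at hx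
    omega
  have h2 : ∑ ℓ ∈ Finset.Ico t R, max 0 (t - ℓ) = 0 := by
    apply Finset.sum_eq_zero
    intro x hx
    simp only [Finset.mem_Ico] at hx
    omega
  rw [h1, h2, Finset.sum_sub_distrib, Finset.sum_const, Int.card_Ico, nsmul_eq_mul]
  have hg := gauss t ht
  have hc : ((t - 0).toNat : ℤ) = t := by omega
  rw [hc]
  linarith

lemma G2 (t T k R : ℤ) (ht : 0 ≤ t) (h2T : 2 * T = t * (t - 1)) (hR : t ≤ R) :
    ∑ ℓ ∈ Finset.Ico (0 : ℤ) R, (if ℓ < t then k - ℓ else 0) = k * t - T := by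
  rw [sum_Ico_split _ 0 t R ht hR]
  have h1 : ∑ ℓ ∈ Finset.Ico (0 : ℤ) t, (if ℓ < t then k - ℓ else 0)
      = ∑ ℓ ∈ Finset.Ico (0 : ℤ) t, (k - ℓ) := by
    apply Finset.sum_congr rfl
    intro x hx
    simp only [Finset.mem_Ico] at hx
    rw [if_pos hx.2]
  have h2 : ∑ ℓ ∈ Finset.Ico t R, (if ℓ < t then k - ℓ else 0) = 0 := by
    apply Finset.sum_eq_zero
    intro x hx
    simp only [Finset.mem_Ico] at hx
    rw [if_neg (by omega)]
  rw [h1, h2, Finset.sum_sub_distrib, Finset.sum_const, Int.card_Ico, nsmul_eq_mul]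
  have hg := gauss t ht
  have hc : ((t - 0).toNat : ℤ) = t := by omega
  rw [hc]
  linarith

/-- the staircase sum -/
noncomputable def S (α c R y : ℤ) : ℤ := ∑ ℓ ∈ Finset.Ico (0 : ℤ) R, max 0 (pq α (y - ℓ * c))

lemma S_stable (α c R R' y : ℤ) (hα : 0 < α) (hc : 0 < c) (h1 : max y 0 < R) (h2 : R ≤ R') :
    S α c R y = S α c R' y := by
  unfold S
  rw [sum_Ico_split _ 0 R R' (by omega) h2]
  have : ∑ ℓ ∈ Finset.Ico R R', max 0 (pq α (y - ℓ * c)) = 0 := by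
    apply Finset.sum_eq_zero
    intro ℓ hℓ
    simp only [Finset.mem_Ico] at hℓ
    have hℓ0 : 0 < ℓ := by omega
    have : ℓ * 1 ≤ ℓ * c := by
      apply mul_le_mul_of_nonneg_left (by omega) (by omega)
    have hneg : y - ℓ * c < 0 := by omega
    have := pq_nonpos α (y - ℓ * c) hα (by omega)
    omega
  omega

lemma C3 (α c t T R y : ℤ) (hα : 0 < α) (ht : 0 ≤ t) (h2T : 2 * T = t * (t - 1)) (hR : t ≤ R) :
    S α (c + α) R (y + t * α) ≤ S α c R y + (T + t) := by
  unfold S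
  have key : ∀ ℓ ∈ Finset.Ico (0 : ℤ) R,
      max 0 (pq α (y + t * α - ℓ * (c + α))) ≤ max 0 (pq α (y - ℓ * c)) + max 0 (t - ℓ) := by
    intro ℓ _
    have h1 : y + t * α - ℓ * (c + α) = (y - ℓ * c) + (t - ℓ) * α := by ring
    rw [h1, pq_add_mul _ _ _ hα]
    omega
  calc ∑ ℓ ∈ Finset.Ico (0 : ℤ) R, max 0 (pq α (y + t * α - ℓ * (c + α)))
      ≤ ∑ ℓ ∈ Finset.Ico (0 : ℤ) R, (max 0 (pq α (y - ℓ * c)) + max 0 (t - ℓ)) :=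
        Finset.sum_le_sum key
    _ = (∑ ℓ ∈ Finset.Ico (0 : ℤ) R, max 0 (pq α (y - ℓ * c)))
        + ∑ ℓ ∈ Finset.Ico (0 : ℤ) R, max 0 (t - ℓ) := Finset.sum_add_distrib
    _ = _ := by rw [G1 t T R ht h2T hR]

lemma C4 (α c t T R z : ℤ) (hα : 0 < α) (hc : 0 < c) (ht : 0 ≤ t)
    (h2T : 2 * T = t * (t - 1)) (hR : t ≤ R) :
    S α c R (z - (max 0 (pq α (z - t * c))) * α) + (max 0 (pq α (z - t * c))) * t - T
      ≤ S α (c + α) R z := by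
  set k := max 0 (pq α (z - t * c)) with hk
  have hk0 : 0 ≤ k := le_max_left _ _
  have hkt : pq α (z - t * c) ≤ k := le_max_right _ _
  unfold S
  have key : ∀ ℓ ∈ Finset.Ico (0 : ℤ) R,
      max 0 (pq α (z - k * α - ℓ * c)) + (if ℓ < t then k - ℓ else 0)
        ≤ max 0 (pq α (z - ℓ * (c + α))) := by
    intro ℓ hℓ
    simp only [Finset.mem_Ico] at hℓ
    have e1 : z - k * α - ℓ * c = (z - ℓ * c) + (-k) * α := by ring
    have e2 : z - ℓ * (c + α) = (z - ℓ * c) + (-ℓ) * α := by ring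
    rw [e1, e2, pq_add_mul _ _ _ hα, pq_add_mul _ _ _ hα]
    set a := pq α (z - ℓ * c) with ha
    by_cases hlt : ℓ < t
    · rw [if_pos hlt]
      have hmono : pq α (z - t * c) ≤ a := by
        apply pq_mono _ _ _ hα
        have : ℓ * c ≤ t * c := mul_le_mul_of_nonneg_right (by omega) hc.le
        omega
      rcases le_or_gt (pq α (z - t * c)) 0 with h0 | h0
      · have : k = 0 := by omega
        omega
      · have : k = pq α (z - t * c) := by omega
        omega
    · rw [if_neg hlt]
      have hmono : a ≤ pq α (z - t * c) := by
        apply pq_mono _ _ _ hα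
        have : t * c ≤ ℓ * c := mul_le_mul_of_nonneg_right (by omega) hc.le
        omega
      omega
  calc (∑ ℓ ∈ Finset.Ico (0 : ℤ) R, max 0 (pq α (z - k * α - ℓ * c))) + k * t - T
      = ∑ ℓ ∈ Finset.Ico (0 : ℤ) R,
          (max 0 (pq α (z - k * α - ℓ * c)) + (if ℓ < t then k - ℓ else 0)) := by
        rw [Finset.sum_add_distrib, G2 t T k R ht h2T hR]
        ring
    _ ≤ _ := Finset.sum_le_sum key

/-- window sums of a periodic function -/
lemma window (E : ℤ → ℤ) (d : ℤ) (hd : 0 ≤ d) (hE : ∀ x, E (x + d) = E x) :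
    ∀ y : ℤ, 0 ≤ y → ∑ x ∈ Finset.Ico y (y + d), E x = ∑ x ∈ Finset.Ico (0 : ℤ) d, E x := by
  intro y hy
  refine Int.le_induction
    (motive := fun s _ => ∑ x ∈ Finset.Ico s (s + d), E x = ∑ x ∈ Finset.Ico (0 : ℤ) d, E x) ?_ ?_ y hy
  · norm_num
  · intro n hn ih
    have h1 : ∑ x ∈ Finset.Ico n (n + 1 + d), E x
        = (∑ x ∈ Finset.Ico n (n + d), E x) + E (n + d) := by
      have := sum_Ico_succ E n (n + d) (by omega)
      rw [show n + 1 + d = n + d + 1 by ring]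
      exact this
    have h2 : ∑ x ∈ Finset.Ico n (n + 1 + d), E x
        = E n + ∑ x ∈ Finset.Ico (n + 1) (n + 1 + d), E x := by
      rw [sum_Ico_split E n (n + 1) (n + 1 + d) (by omega) (by omega)]
      have : ∑ x ∈ Finset.Ico n (n + 1), E x = E n := by
        rw [sum_Ico_succ E n n le_rfl]
        simp
      rw [this]
    have h3 : E (n + d) = E n := hE n
    omega

lemma accum (E : ℤ → ℤ) (α t : ℤ) (hα : 0 < α) (hE : ∀ x, E (x + α) = E x)
    (hsum : ∑ x ∈ Finset.Ico (0 : ℤ) α, E x = t) :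
    ∀ k : ℤ, 0 ≤ k → ∀ y : ℤ, 0 ≤ y →
      ∑ x ∈ Finset.Ico (0 : ℤ) (y + k * α), E x = (∑ x ∈ Finset.Ico (0 : ℤ) y, E x) + k * t := by
  intro k hk
  refine Int.le_induction
    (motive := fun s _ => ∀ y : ℤ, 0 ≤ y →
      ∑ x ∈ Finset.Ico (0 : ℤ) (y + s * α), E x
        = (∑ x ∈ Finset.Ico (0 : ℤ) y, E x) + s * t) ?_ ?_ k hk
  · intro y hy; norm_num
  · intro n hn ih y hy
    have hna : 0 ≤ n * α := mul_nonneg hn hα.le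
    have h1 : y + (n + 1) * α = (y + n * α) + α := by ring
    rw [h1, sum_Ico_split E 0 (y + n * α) (y + n * α + α) (by omega) (by omega),
      window E α hα.le hE (y + n * α) (by omega), hsum, ih y hy]
    ring


/-- sum of f over [0, m*d) for d-periodic f -/
lemma periodic_sum (f : ℤ → ℤ) (d : ℤ) (hd : 0 < d) (hf : ∀ x, f (x + d) = f x) :
    ∀ m : ℤ, 0 ≤ m → ∑ x ∈ Finset.Ico (0 : ℤ) (m * d), f x = m * ∑ x ∈ Finset.Ico (0 : ℤ) d, f x := by
  intro m hm
  refine Int.le_induction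
    (motive := fun s _ => ∑ x ∈ Finset.Ico (0 : ℤ) (s * d), f x = s * ∑ x ∈ Finset.Ico (0 : ℤ) d, f x)
    ?_ ?_ m hm
  · norm_num
  · intro s hs ih
    have hsd : 0 ≤ s * d := mul_nonneg hs hd.le
    have h1 : (s + 1) * d = s * d + d := by ring
    rw [h1, sum_Ico_split f 0 (s * d) (s * d + d) hsd (by omega),
      window f d hd.le hf (s * d) hsd, ih]
    ring

/-- shift by multiples preserves a periodic function -/
lemma periodic_shift (f : ℤ → ℤ) (d : ℤ) (hf : ∀ x, f (x + d) = f x) :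
    ∀ (m x : ℤ), f (x + m * d) = f x := by
  intro m
  induction m using Int.induction_on with
  | zero => intro x; norm_num
  | succ k ih =>
    intro x
    have : x + (k + 1 : ℤ) * d = (x + k * d) + d := by ring
    rw [this, hf, ih]
  | pred k ih =>
    intro x
    have h2 := hf (x + (-(k:ℤ) - 1) * d)
    have e : x + (-(k:ℤ) - 1) * d + d = x + (-(k:ℤ)) * d := by ring
    rw [e] at h2
    have h3 := ih x
    have goal_eq : x + (-(k:ℤ) - 1) * d = x + (-(k:ℤ)+ -1) * d := by ring
    calc f (x + (-(k:ℤ) + -1) * d) = f (x + (-(k:ℤ) - 1) * d) := by rw [← goal_eq]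
      _ = f (x + (-(k:ℤ)) * d) := h2.symm
      _ = f x := h3

/-- modular bijection sum: ρ ↦ (-(ρ*s)) % d is a bijection of [0,d) when s is invertible -/
lemma sum_emod_bij (d s x : ℤ) (hd : 0 < d) (h : d ∣ s * x + 1) :
    ∑ ρ ∈ Finset.Ico (0 : ℤ) d, (-(ρ * s)) % d = ∑ ρ ∈ Finset.Ico (0 : ℤ) d, ρ := by
  have emod_mul_emod : ∀ u v : ℤ, (u % d * v) % d = (u * v) % d := by
    intro u v
    conv_rhs => rw [Int.mul_emod]
    rw [Int.mul_emod, Int.emod_emod_of_dvd _ dvd_rfl]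
  have cong : ∀ u v : ℤ, d ∣ u - v → u % d = v % d := by
    intro u v huv
    rw [Int.emod_eq_emod_iff_emod_sub_eq_zero]
    exact Int.emod_eq_zero_of_dvd huv
  refine Finset.sum_nbij' (fun ρ => (-(ρ * s)) % d) (fun v => (v * x) % d) ?_ ?_ ?_ ?_ ?_
  · intro ρ hρ
    simp only [Finset.mem_Ico]
    exact ⟨Int.emod_nonneg _ (ne_of_gt hd), Int.emod_lt_of_pos _ hd⟩
  · intro v hv
    simp only [Finset.mem_Ico]
    exact ⟨Int.emod_nonneg _ (ne_of_gt hd), Int.emod_lt_of_pos _ hd⟩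
  · intro ρ hρ
    simp only [Finset.mem_Ico] at hρ
    show (-(ρ * s) % d) * x % d = ρ
    rw [emod_mul_emod]
    have : d ∣ (-(ρ * s)) * x - ρ := by
      have : (-(ρ * s)) * x - ρ = (-ρ) * (s * x + 1) := by ring
      rw [this]
      exact Dvd.dvd.mul_left h _
    rw [cong _ _ this, Int.emod_eq_of_lt hρ.1 hρ.2]
  · intro v hv
    simp only [Finset.mem_Ico] at hv
    show (-((v * x % d) * s)) % d = v
    have e1 : (-(((v * x) % d) * s)) % d = (-(v * x * s)) % d := by
      rw [show (-(((v * x) % d) * s)) = ((v*x) % d) * (-s) by ring,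
        emod_mul_emod, show (v * x * (-s)) = -(v * x * s) by ring]
    rw [e1]
    have : d ∣ (-(v * x * s)) - v := by
      have : (-(v * x * s)) - v = (-v) * (s * x + 1) := by ring
      rw [this]
      exact Dvd.dvd.mul_left h _
    rw [cong _ _ this, Int.emod_eq_of_lt hv.1 hv.2]
  · intro ρ hρ
    rfl

lemma sysA {m : ℕ} (a : Fin m → ℤ) (ha : ∀ i, 1 ≤ a i) (α : ℤ)
    (hdvd : ∀ i, a i ∣ α)
    (b : Fin m → ℤ) (c : ℤ) (hc : 0 < c) (bn e0 : ℤ)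
    (hsys : e0 * (α * c) + (∑ i, b i * ((α / a i) * c)) + bn * α = -1)
    (he0 : |e0| = -e0)
    (Δ : ℤ → ℤ)
    (hΔ : ∀ x : ℤ, Δ x = 1 + |e0| * x -
      ((∑ i, ⌈(x * b i : ℚ) / (a i : ℚ)⌉) + ⌈(x * bn : ℚ) / (c : ℚ)⌉))
    (j : ℤ) :
    (α * c) * (Δ j) =
      (α * c) + j - (∑ i, ((-(j * b i)) % a i) * (α / a i)) * c - ((-(j * bn)) % c) * α := by
  have key_i : ∀ i : Fin m, (α * c) * ⌈(j * b i : ℚ) / (a i : ℚ)⌉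
      = ((α / a i) * c) * (j * b i) + ((-(j * b i)) % a i) * ((α / a i) * c) := by
    intro i
    have hai : 0 < a i := lt_of_lt_of_le one_pos (ha i)
    have hq : (α / a i) * a i = α := Int.ediv_mul_cancel (hdvd i)
    rw [show ((j:ℚ) * ((b i : ℤ):ℚ)) = (((j * b i : ℤ)) : ℚ) by push_cast; ring,
      ceil_int _ _ hai]
    have hm : (a i) * (-(-(j * b i) / a i)) = j * b i + (-(j * b i)) % a i := by
      have := Int.mul_ediv_add_emod (-(j * b i)) (a i)
      linarith
    have hstep : (α * c) * (-(-(j * b i) / (a i)))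
        = ((α / a i) * c) * ((a i) * (-(-(j * b i) / a i))) := by
      rw [show ((α / a i) * c) * ((a i) * (-(-(j * b i) / a i)))
          = ((α / a i) * (a i)) * (c * (-(-(j * b i) / a i))) from by ring, hq]
      ring
    calc (α * c) * (-(-(j * b i) / (a i)))
        = ((α / a i) * c) * ((a i) * (-(-(j * b i) / a i))) := hstep
      _ = ((α / a i) * c) * (j * b i + (-(j * b i)) % a i) := by rw [hm]
      _ = _ := by ring
  have key_n : (α * c) * ⌈(j * bn : ℚ) / (c : ℚ)⌉ = α * (j * bn) + ((-(j * bn)) % c) * α := by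
    rw [show ((j:ℚ) * ((bn : ℤ):ℚ)) = (((j * bn : ℤ)) : ℚ) by push_cast; ring,
      ceil_int _ _ hc]
    have hm : c * (-(-(j * bn) / c)) = j * bn + (-(j * bn)) % c := by
      have := Int.mul_ediv_add_emod (-(j * bn)) c
      linarith
    calc (α * c) * (-(-(j * bn) / c)) = α * (c * (-(-(j * bn) / c))) := by ring
      _ = α * (j * bn + (-(j * bn)) % c) := by rw [hm]
      _ = _ := by ring
  have habs : |e0| * (α * c) = 1 + (∑ i, b i * ((α / a i) * c)) + bn * α := by
    rw [he0]; linarith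
  have expand : (α * c) * (∑ i, ⌈(j * b i : ℚ) / (a i : ℚ)⌉)
      = (∑ i, ((α / a i) * c) * (j * b i)) + ∑ i, ((-(j * b i)) % a i) * ((α / a i) * c) := by
    rw [Finset.mul_sum, ← Finset.sum_add_distrib]
    exact Finset.sum_congr rfl fun i _ => key_i i
  have e2 : (∑ i, ((α / a i) * c) * (j * b i)) = j * ∑ i, b i * ((α / a i) * c) := by
    rw [Finset.mul_sum]; exact Finset.sum_congr rfl fun i _ => by ring
  have e3 : (∑ i, ((-(j * b i)) % a i) * ((α / a i) * c))
      = (∑ i, ((-(j * b i)) % a i) * (α / a i)) * c := by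
    rw [Finset.sum_mul]; exact Finset.sum_congr rfl fun i _ => by ring
  calc (α * c) * Δ j
      = (α * c) * 1 + (|e0| * (α * c)) * j - (α * c) * (∑ i, ⌈(j * b i : ℚ) / (a i : ℚ)⌉)
        - (α * c) * ⌈(j * bn : ℚ) / (c : ℚ)⌉ := by rw [hΔ j]; ring
    _ = _ := by rw [habs, expand, e2, e3, key_n]; ring


lemma count_step (α c : ℤ) (hα : 0 < α) (hc : 0 < c) (hcop : IsCoprime α c)
    (j ν rn w R : ℤ)
    (hν0 : 0 ≤ ν) (hν1 : ν < α) (hrn0 : 0 ≤ rn) (hrn1 : rn < c)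
    (hw : (α * c) * w = j - ν * c - rn * α)
    (hj : 0 ≤ j) (hR : j < R) :
    S α c R (j + 1) = S α c R j + (w + 1) := by
  have hαc : 0 < α * c := mul_pos hα hc
  have hw0 : 0 ≤ w + 1 := by nlinarith
  have hu : j - ν * c = α * (c * w + rn) := by linarith
  have pq0 : pq α 0 = 0 := by unfold pq; simp
  have step : ∀ ℓ ∈ Finset.Ico (0:ℤ) R,
      max 0 (pq α (j + 1 - ℓ * c)) =
      max 0 (pq α (j - ℓ * c)) + (if α ∣ (j - ℓ * c) ∧ ℓ * c ≤ j then 1 else 0) := by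
    intro ℓ _
    set v := j - ℓ * c with hv
    have e : j + 1 - ℓ * c = v + 1 := by ring
    rw [e, pq_succ α v hα]
    by_cases hdv : α ∣ v
    · rw [if_pos hdv]
      by_cases hle : ℓ * c ≤ j
      · rw [if_pos ⟨hdv, hle⟩]
        have hv0 : 0 ≤ v := by omega
        have hA : 0 ≤ pq α v := by
          have := pq_mono α 0 v hα hv0
          omega
        omega
      · rw [if_neg (by tauto)]
        have hvneg : v < 0 := by omega
        obtain ⟨kk, hkk⟩ := hdv
        have hkkneg : kk ≤ -1 := by nlinarith
        have : v ≤ -α := by nlinarith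
        have hA : pq α v ≤ -1 := by
          have h1 : pq α (-α) = -1 := by
            have := pq_add_mul α 0 (-1) hα
            rw [pq0] at this
            have e2 : (0 : ℤ) + (-1) * α = -α := by ring
            rw [e2] at this
            omega
          have := pq_mono α v (-α) hα this
          omega
        omega
    · rw [if_neg hdv, if_neg (show ¬(α ∣ v ∧ ℓ * c ≤ j) from fun hc' => hdv hc'.1)]
      omega
  have hsum : S α c R (j+1) = S α c R j
      + ∑ ℓ ∈ Finset.Ico (0:ℤ) R, (if α ∣ (j - ℓ * c) ∧ ℓ * c ≤ j then 1 else 0) := by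
    unfold S
    rw [← Finset.sum_add_distrib]
    exact Finset.sum_congr rfl step
  have hfilter : (Finset.Ico (0:ℤ) R).filter (fun ℓ => α ∣ (j - ℓ * c) ∧ ℓ * c ≤ j)
      = Finset.image (fun h => ν + h * α) (Finset.Ico (0:ℤ) (w + 1)) := by
    ext ℓ
    simp only [Finset.mem_filter, Finset.mem_Ico, Finset.mem_image]
    constructor
    · rintro ⟨⟨hℓ0, hℓR⟩, hdv, hle⟩
      have hd2 : α ∣ (ν - ℓ) * c := by
        have e : (ν - ℓ) * c = (j - ℓ * c) - (j - ν * c) := by ring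
        rw [e]
        exact dvd_sub hdv ⟨_, hu⟩
      have hd3 : α ∣ (ν - ℓ) := hcop.dvd_of_dvd_mul_right hd2
      obtain ⟨h, hh⟩ := hd3
      refine ⟨-h, ⟨?_, ?_⟩, by linarith⟩
      · by_contra hcon
        push_neg at hcon
        have : h ≥ 1 := by omega
        have : α * h ≥ α := by nlinarith
        omega
      · -- -h < w + 1 from ℓ*c ≤ j
        have hℓeq : ℓ = ν - α * h := by omega
        have : (ν - α * h) * c ≤ ν * c + (α * c) * w + rn * α := by
          rw [← hℓeq]; linarith
        have h2 : -h * (α * c) ≤ (α * c) * w + rn * α := by nlinarith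
        have h3 : -h * (α * c) < (α*c) * (w + 1) := by nlinarith
        nlinarith [h3]
    · rintro ⟨h, ⟨h0, h1⟩, rfl⟩
      have hh : h ≤ w := by omega
      have hαch : h * (α * c) ≤ w * (α * c) := by nlinarith
      have hlc : (ν + h * α) * c ≤ j := by nlinarith
      have hge : 0 ≤ ν + h * α := by nlinarith
      refine ⟨⟨hge, ?_⟩, ⟨c * w + rn - h * c, by ring_nf; nlinarith [hu]⟩, hlc⟩
      · -- ν + h*α < R
        have : (ν + h * α) * 1 ≤ (ν + h * α) * c := by nlinarith
        omega
  have hcard : ∑ ℓ ∈ Finset.Ico (0:ℤ) R, (if α ∣ (j - ℓ * c) ∧ ℓ * c ≤ j then (1:ℤ) else 0)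
      = w + 1 := by
    rw [Finset.sum_boole, hfilter, Finset.card_image_of_injective _
      (fun x y hxy => by
        have : x * α = y * α := by omega
        exact mul_right_cancel₀ (ne_of_gt hα) this), Int.card_Ico]
    omega
  omega

lemma tau_eq (α c : ℤ) (hα : 0 < α) (hc : 0 < c) (hcop : IsCoprime α c)
    (Δ τ E νf rnf : ℤ → ℤ)
    (hτ : ∀ x : ℤ, τ x = ∑ i ∈ Finset.Ico (0:ℤ) x, Δ i)
    (hν0 : ∀ j, 0 ≤ νf j) (hν1 : ∀ j, νf j < α)
    (hrn0 : ∀ j, 0 ≤ rnf j) (hrn1 : ∀ j, rnf j < c)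
    (hw : ∀ j, (α * c) * (Δ j - 1 + E j) = j - νf j * c - rnf j * α) :
    ∀ x : ℤ, 0 ≤ x → ∀ R : ℤ, x < R →
      τ x = S α c R x - ∑ i ∈ Finset.Ico (0:ℤ) x, E i := by
  intro x hx
  refine Int.le_induction (motive := fun s _ => ∀ R : ℤ, s < R →
      τ s = S α c R s - ∑ i ∈ Finset.Ico (0:ℤ) s, E i) ?_ ?_ x hx
  · intro R hR
    rw [hτ 0]
    simp only [Finset.Ico_self, Finset.sum_empty]
    have hS0 : S α c R 0 = 0 := by
      apply Finset.sum_eq_zero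
      intro ℓ hℓ
      simp only [Finset.mem_Ico] at hℓ
      have h1 : 0 - ℓ * c ≤ 0 := by nlinarith [hℓ.1]
      have := pq_nonpos α (0 - ℓ * c) hα h1
      omega
    omega
  · intro s hs ih R hR
    have hτs : τ (s+1) = τ s + Δ s := by rw [hτ (s+1), hτ s, sum_Ico_succ _ _ _ hs]
    have hEs : (∑ i ∈ Finset.Ico (0:ℤ) (s+1), E i) = (∑ i ∈ Finset.Ico (0:ℤ) s, E i) + E s :=
      sum_Ico_succ _ _ _ hs
    have hcount := count_step α c hα hc hcop s (νf s) (rnf s) (Δ s - 1 + E s) R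
      (hν0 s) (hν1 s) (hrn0 s) (hrn1 s) (hw s) hs (by omega)
    have ihR := ih R (by omega)
    omega


lemma min_exists (τ Δ : ℤ → ℤ) (B : ℤ) (hB : 0 ≤ B)
    (hτ : ∀ x : ℤ, τ x = ∑ i ∈ Finset.Ico (0:ℤ) x, Δ i)
    (hpos : ∀ j : ℤ, B ≤ j → 0 ≤ Δ j) :
    ∃ m : ℤ, 0 ≤ m ∧ ∀ x : ℤ, 0 ≤ x → τ m ≤ τ x := by
  have hmono : ∀ x : ℤ, B ≤ x → τ B ≤ τ x := by
    intro x hx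
    refine Int.le_induction (motive := fun s _ => τ B ≤ τ s) ?_ ?_ x hx
    · exact le_rfl
    · intro y hy ih
      have h1 : τ (y+1) = τ y + Δ y := by rw [hτ (y+1), hτ y, sum_Ico_succ _ _ _ (le_trans hB hy)]
      have h2 := hpos y hy
      omega
  have hne : ((Finset.Icc (0:ℤ) B).image τ).Nonempty :=
    ⟨τ 0, Finset.mem_image_of_mem τ (by simp [hB])⟩
  obtain ⟨m, hmmem, hmeq⟩ := Finset.mem_image.mp (Finset.min'_mem _ hne)
  refine ⟨m, (Finset.mem_Icc.mp hmmem).1, ?_⟩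
  intro x hx
  rcases le_or_gt x B with h | h
  · have hmem : τ x ∈ (Finset.Icc (0:ℤ) B).image τ :=
      Finset.mem_image_of_mem τ (Finset.mem_Icc.mpr ⟨hx, h⟩)
    have := Finset.min'_le _ _ hmem
    omega
  · have h1 := hmono x h.le
    have hmem : τ B ∈ (Finset.Icc (0:ℤ) B).image τ :=
      Finset.mem_image_of_mem τ (Finset.mem_Icc.mpr ⟨hB, le_rfl⟩)
    have := Finset.min'_le _ _ hmem
    omega

lemma sum_M {m : ℕ} (a : Fin m → ℤ) (ha : ∀ i, 1 ≤ a i) (α : ℤ) (hα : 0 < α)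
    (hdvd : ∀ i, a i ∣ α) (b : Fin m → ℤ) (c : ℤ)
    (hinv : ∀ i, (a i) ∣ b i * ((α / a i) * c) + 1) :
    2 * (∑ ρ ∈ Finset.Ico (0:ℤ) α, ∑ i, ((-(ρ * b i)) % a i) * (α / a i))
      = α * (∑ i, (α - α / a i)) := by
  rw [Finset.sum_comm, Finset.mul_sum, Finset.mul_sum]
  apply Finset.sum_congr rfl
  intro i _
  have hai : 0 < a i := lt_of_lt_of_le one_pos (ha i)
  have hq : (α / a i) * a i = α := Int.ediv_mul_cancel (hdvd i)
  have hmq : 0 ≤ α / a i := Int.ediv_nonneg hα.le hai.le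
  have hper : ∀ x : ℤ, (-((x + a i) * b i)) % a i = (-(x * b i)) % a i := by
    intro x
    have e : -((x + a i) * b i) = -(x * b i) + a i * (-(b i)) := by ring
    rw [e, Int.add_mul_emod_self_left]
  have hsum1 : ∑ ρ ∈ Finset.Ico (0:ℤ) α, (-(ρ * b i)) % a i
      = (α / a i) * ∑ ρ ∈ Finset.Ico (0:ℤ) (a i), (-(ρ * b i)) % a i := by
    have h := periodic_sum (fun x => (-(x * b i)) % a i) (a i) hai hper (α / a i) hmq
    rw [hq] at h
    exact h
  have hbij := sum_emod_bij (a i) (b i) ((α / a i) * c) hai (hinv i)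
  have hgauss := gauss (a i) hai.le
  have hfact : ∑ ρ ∈ Finset.Ico (0:ℤ) α, ((-(ρ * b i)) % a i) * (α / a i)
      = (∑ ρ ∈ Finset.Ico (0:ℤ) α, (-(ρ * b i)) % a i) * (α / a i) := by
    rw [Finset.sum_mul]
  rw [hfact, hsum1, hbij]
  -- 2 * ((α/a i) * Σρ * (α/a i)) = α * (α - α/a i)  with 2Σρ = a i (a i - 1)
  set g := α / a i
  set Sg := ∑ ρ ∈ Finset.Ico (0:ℤ) (a i), ρ
  linear_combination (g * g) * hgauss + ((g * (a i) + α - g)) * hq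


lemma sum_nu {m : ℕ} (a : Fin m → ℤ) (ha : ∀ i, 1 ≤ a i) (α : ℤ) (hα : 0 < α)
    (hdvd : ∀ i, a i ∣ α) (b : Fin m → ℤ) (c : ℤ)
    (hK : α ∣ (∑ i, b i * (α / a i)) * c + 1) :
    2 * (∑ ρ ∈ Finset.Ico (0:ℤ) α, (∑ i, ((-(ρ * b i)) % a i) * (α / a i)) % α)
      = α * (α - 1) := by
  have hcong : ∀ ρ : ℤ, (∑ i, ((-(ρ * b i)) % a i) * (α / a i)) % α
      = (-(ρ * (∑ i, b i * (α / a i)))) % α := by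
    intro ρ
    rw [Int.emod_eq_emod_iff_emod_sub_eq_zero]
    apply Int.emod_eq_zero_of_dvd
    have e : ∑ i, (((-(ρ * b i)) % a i) - (-(ρ * b i))) * (α / a i)
        = (∑ i, ((-(ρ * b i)) % a i) * (α / a i)) - ∑ i, (-(ρ * b i)) * (α / a i) := by
      rw [← Finset.sum_sub_distrib]
      exact Finset.sum_congr rfl fun i _ => by ring
    have e2 : ∑ i, (-(ρ * b i)) * (α / a i) = -(ρ * (∑ i, b i * (α / a i))) := by
      rw [Finset.mul_sum, ← Finset.sum_neg_distrib]
      exact Finset.sum_congr rfl fun i _ => by ring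
    have this2 : (∑ i, ((-(ρ * b i)) % a i) * (α / a i)) - (-(ρ * (∑ i, b i * (α / a i))))
        = ∑ i, (((-(ρ * b i)) % a i) - (-(ρ * b i))) * (α / a i) := by
      rw [e, e2]
    rw [this2]
    apply Finset.dvd_sum
    intro i _
    have h1 : a i ∣ ((-(ρ * b i)) % a i) - (-(ρ * b i)) := by
      have := Int.emod_def (-(ρ * b i)) (a i)
      exact ⟨-((-(ρ * b i)) / a i), by linarith⟩
    obtain ⟨q, hq2⟩ := h1
    rw [hq2]
    have hq : (α / a i) * a i = α := Int.ediv_mul_cancel (hdvd i)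
    exact ⟨q, by linear_combination q * hq⟩
  calc 2 * (∑ ρ ∈ Finset.Ico (0:ℤ) α, (∑ i, ((-(ρ * b i)) % a i) * (α / a i)) % α)
      = 2 * (∑ ρ ∈ Finset.Ico (0:ℤ) α, (-(ρ * (∑ i, b i * (α / a i)))) % α) := by
        congr 1
        exact Finset.sum_congr rfl fun ρ _ => hcong ρ
    _ = 2 * (∑ ρ ∈ Finset.Ico (0:ℤ) α, ρ) := by
        rw [sum_emod_bij α (∑ i, b i * (α / a i)) c hα hK]
    _ = α * (α - 1) := gauss α hα.le

end Stmt18Aux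

set_option maxHeartbeats 1600000 in
open Stmt18Aux in
/-- The minima over the nonnegative integers of the two τ-sequences exist and min τ′ − min τ = −t(t−1)/2 = −(1/8)·(((n−2)·α − Σ α/a_i)² − 1). -/
theorem stmt_18 (n : ℕ) (hn : 3 ≤ n) (a : Fin (n - 1) → ℤ) (an : ℤ)
    (ha : ∀ i, 2 ≤ a i) (han : 2 ≤ an)
    (hcop : ∀ i j, i ≠ j → IsCoprime (a i) (a j))
    (hcopn : ∀ i, IsCoprime (a i) an)
    (α P : ℤ) (hα : α = ∏ i, a i) (hP : P = α * an)
    (e0 : ℤ) (b : Fin (n - 1) → ℤ) (bn : ℤ)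
    (hb : ∀ i, 1 ≤ b i ∧ b i < a i) (hbn : 1 ≤ bn ∧ bn < an)
    (heq : e0 * P + (∑ i, b i * (P / a i)) + bn * α = -1)
    (Δ : ℤ → ℤ)
    (hΔ : ∀ x : ℤ, Δ x = 1 + |e0| * x -
      ((∑ i, ⌈(x * b i : ℚ) / (a i : ℚ)⌉) + ⌈(x * bn : ℚ) / (an : ℚ)⌉))
    -- the modified Seifert data with last fiber an' = an + α
    (an' P' : ℤ) (han' : an' = an + α) (hP' : P' = α * an')
    (e0' : ℤ) (b' : Fin (n - 1) → ℤ) (bn' : ℤ)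
    (hb' : ∀ i, 1 ≤ b' i ∧ b' i < a i) (hbn' : 1 ≤ bn' ∧ bn' < an')
    (heq' : e0' * P' + (∑ i, b' i * (P' / a i)) + bn' * α = -1)
    (Δ' : ℤ → ℤ)
    (hΔ' : ∀ x : ℤ, Δ' x = 1 + |e0'| * x -
      ((∑ i, ⌈(x * b' i : ℚ) / (a i : ℚ)⌉) + ⌈(x * bn' : ℚ) / (an' : ℚ)⌉))
    (t : ℤ) (ht : 2 * t = ((n : ℤ) - 2) * α - (∑ i, α / a i) + 1)
    (τ τ' : ℤ → ℤ)
    (hτ : ∀ x : ℤ, τ x = ∑ i ∈ Finset.Ico (0 : ℤ) x, Δ i)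
    (hτ' : ∀ x : ℤ, τ' x = ∑ i ∈ Finset.Ico (0 : ℤ) x, Δ' i) :
    ∃ m m2 : ℤ, 0 ≤ m ∧ 0 ≤ m2 ∧
      (∀ x : ℤ, 0 ≤ x → τ m ≤ τ x) ∧ (∀ x : ℤ, 0 ≤ x → τ' m2 ≤ τ' x) ∧
      τ' m2 - τ m = -(t * (t - 1) / 2) ∧
      8 * (τ' m2 - τ m) = -((((n : ℤ) - 2) * α - ∑ i, α / a i) ^ 2 - 1) := by
  -- ===== basic positivity =====
  have ha1 : ∀ i, 1 ≤ a i := fun i => by linarith [ha i]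
  have hai0 : ∀ i : Fin (n-1), 0 < a i := fun i => by linarith [ha i]
  have hαpos : 0 < α := by
    rw [hα]; exact Finset.prod_pos fun i _ => hai0 i
  have hc : 0 < an := by linarith
  have hc' : 0 < an' := by rw [han']; linarith
  have hdvd : ∀ i : Fin (n-1), a i ∣ α := fun i => hα ▸ Finset.dvd_prod_of_mem a (Finset.mem_univ i)
  have hquot : ∀ i : Fin (n-1), (α / a i) * a i = α := fun i => Int.ediv_mul_cancel (hdvd i)
  have hquot1 : ∀ i : Fin (n-1), 1 ≤ α / a i := by
    intro i
    have h0 : 0 ≤ α / a i := Int.ediv_nonneg hαpos.le (hai0 i).le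
    rcases eq_or_lt_of_le h0 with h | h
    · exfalso; have := hquot i; rw [← h] at this; simp at this; omega
    · omega
  have hdvd2 : ∀ k i : Fin (n-1), i ≠ k → a i ∣ α / a k := by
    intro k i hik
    have he : α / a k = ∏ i' ∈ Finset.univ.erase k, a i' := by
      have h1 : (∏ i' ∈ Finset.univ.erase k, a i') * a k = α := by
        rw [hα]; exact Finset.prod_erase_mul _ _ (Finset.mem_univ k)
      rw [← h1]
      exact Int.mul_ediv_cancel _ (ne_of_gt (hai0 k))
    rw [he]
    exact Finset.dvd_prod_of_mem a (Finset.mem_erase.mpr ⟨hik, Finset.mem_univ i⟩)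
  -- ===== rewrite the defining equations =====
  have hQ : ∀ i : Fin (n-1), P / a i = (α / a i) * an := by
    intro i
    obtain ⟨g, hg⟩ := hdvd i
    have hg2 : α / a i = g := by rw [hg]; exact Int.mul_ediv_cancel_left g (ne_of_gt (hai0 i))
    have : P = a i * (g * an) := by rw [hP, hg]; ring
    rw [this, Int.mul_ediv_cancel_left _ (ne_of_gt (hai0 i)), hg2]
  have hQ' : ∀ i : Fin (n-1), P' / a i = (α / a i) * an' := by
    intro i
    obtain ⟨g, hg⟩ := hdvd i
    have hg2 : α / a i = g := by rw [hg]; exact Int.mul_ediv_cancel_left g (ne_of_gt (hai0 i))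
    have : P' = a i * (g * an') := by rw [hP', hg]; ring
    rw [this, Int.mul_ediv_cancel_left _ (ne_of_gt (hai0 i)), hg2]
  have hsys : e0 * (α * an) + (∑ i, b i * ((α / a i) * an)) + bn * α = -1 := by
    have e1 : (∑ i, b i * (P / a i)) = ∑ i, b i * ((α / a i) * an) :=
      Finset.sum_congr rfl fun i _ => by rw [hQ i]
    rw [← e1, ← hP]; exact heq
  have hsys' : e0' * (α * an') + (∑ i, b' i * ((α / a i) * an')) + bn' * α = -1 := by
    have e1 : (∑ i, b' i * (P' / a i)) = ∑ i, b' i * ((α / a i) * an') :=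
      Finset.sum_congr rfl fun i _ => by rw [hQ' i]
    rw [← e1, ← hP']; exact heq'
  -- ===== e0 < 0 =====
  have hbpos : ∀ i : Fin (n-1), 1 ≤ b i * ((α / a i) * an) := by
    intro i
    have h1 := (hb i).1
    have h2 := hquot1 i
    have h3 : 1 ≤ (α / a i) * an := by nlinarith [mul_nonneg (by linarith : (0:ℤ) ≤ α / a i - 1) (by linarith : (0:ℤ) ≤ an)]
    nlinarith [mul_nonneg (by linarith : (0:ℤ) ≤ b i - 1) (by linarith : (0:ℤ) ≤ (α / a i) * an - 1)]
  have hbpos' : ∀ i : Fin (n-1), 1 ≤ b' i * ((α / a i) * an') := by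
    intro i
    have h1 := (hb' i).1
    have h2 := hquot1 i
    have h4 : 2 ≤ an' := by rw [han']; linarith
    have h3 : 1 ≤ (α / a i) * an' := by nlinarith [mul_nonneg (by linarith : (0:ℤ) ≤ α / a i - 1) (by linarith : (0:ℤ) ≤ an')]
    nlinarith [mul_nonneg (by linarith : (0:ℤ) ≤ b' i - 1) (by linarith : (0:ℤ) ≤ (α / a i) * an' - 1)]
  have he0 : |e0| = -e0 := by
    have hsumpos : 0 ≤ ∑ i, b i * ((α / a i) * an) :=
      Finset.sum_nonneg fun i _ => by linarith [hbpos i]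
    have hbnα : 1 ≤ bn * α := by
      have := mul_nonneg (by linarith [hbn.1] : (0:ℤ) ≤ bn - 1) hαpos.le
      nlinarith
    have h1 : e0 * (α * an) ≤ -2 := by linarith [hsys]
    have he0neg : e0 < 0 := by
      by_contra hcon
      push_neg at hcon
      have h2 : (0:ℤ) ≤ e0 * (α * an) := mul_nonneg hcon (by nlinarith)
      linarith
    exact abs_of_neg he0neg
  have he0' : |e0'| = -e0' := by
    have hsumpos : 0 ≤ ∑ i, b' i * ((α / a i) * an') :=
      Finset.sum_nonneg fun i _ => by linarith [hbpos' i]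
    have hbnα : 1 ≤ bn' * α := by
      have := mul_nonneg (by linarith [hbn'.1] : (0:ℤ) ≤ bn' - 1) hαpos.le
      nlinarith
    have h1 : e0' * (α * an') ≤ -2 := by linarith [hsys']
    have he0neg : e0' < 0 := by
      by_contra hcon
      push_neg at hcon
      have h2 : (0:ℤ) ≤ e0' * (α * an') := mul_nonneg hcon (by nlinarith)
      linarith
    exact abs_of_neg he0neg
  -- ===== per-i inverse facts =====
  have hinv : ∀ i : Fin (n-1), a i ∣ b i * ((α / a i) * an) + 1 := by
    intro i
    have hsplit : (∑ k ∈ Finset.univ.erase i, b k * ((α / a k) * an)) + b i * ((α / a i) * an)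
        = ∑ k, b k * ((α / a k) * an) := Finset.sum_erase_add _ _ (Finset.mem_univ i)
    have hrest : a i ∣ ∑ k ∈ Finset.univ.erase i, b k * ((α / a k) * an) := by
      apply Finset.dvd_sum
      intro k hk
      have hki : k ≠ i := (Finset.mem_erase.mp hk).1
      exact ((hdvd2 k i (Ne.symm hki)).mul_right an).mul_left (b k)
    have hterm1 : a i ∣ e0 * (α * an) := ((hdvd i).mul_right an).mul_left e0
    have hterm2 : a i ∣ bn * α := (hdvd i).mul_left bn
    have heqi : b i * ((α / a i) * an) + 1
        = -(e0 * (α * an)) + (-(bn * α)) + (-(∑ k ∈ Finset.univ.erase i, b k * ((α / a k) * an))) := by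
      linarith [hsplit, hsys]
    rw [heqi]
    exact dvd_add (dvd_add hterm1.neg_right hterm2.neg_right) hrest.neg_right
  have hinv' : ∀ i : Fin (n-1), a i ∣ b' i * ((α / a i) * an') + 1 := by
    intro i
    have hsplit : (∑ k ∈ Finset.univ.erase i, b' k * ((α / a k) * an')) + b' i * ((α / a i) * an')
        = ∑ k, b' k * ((α / a k) * an') := Finset.sum_erase_add _ _ (Finset.mem_univ i)
    have hrest : a i ∣ ∑ k ∈ Finset.univ.erase i, b' k * ((α / a k) * an') := by
      apply Finset.dvd_sum
      intro k hk
      have hki : k ≠ i := (Finset.mem_erase.mp hk).1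
      exact ((hdvd2 k i (Ne.symm hki)).mul_right an').mul_left (b' k)
    have hterm1 : a i ∣ e0' * (α * an') := ((hdvd i).mul_right an').mul_left e0'
    have hterm2 : a i ∣ bn' * α := (hdvd i).mul_left bn'
    have heqi : b' i * ((α / a i) * an') + 1
        = -(e0' * (α * an')) + (-(bn' * α)) + (-(∑ k ∈ Finset.univ.erase i, b' k * ((α / a k) * an'))) := by
      linarith [hsplit, hsys']
    rw [heqi]
    exact dvd_add (dvd_add hterm1.neg_right hterm2.neg_right) hrest.neg_right
  -- ===== b' = b =====
  have hbb : ∀ i : Fin (n-1), b' i = b i := by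
    intro i
    have h1 : a i ∣ b i * ((α / a i) * an) + 1 := hinv i
    have h1' : a i ∣ b' i * ((α / a i) * an) + 1 := by
      have h2 := hinv' i
      have h3 : a i ∣ b' i * ((α / a i) * α) := ((hdvd i).mul_left (α / a i)).mul_left (b' i)
      have e : b' i * ((α / a i) * an) + 1
          = (b' i * ((α / a i) * an') + 1) - b' i * ((α / a i) * α) := by
        rw [han']; ring
      rw [e]
      exact dvd_sub h2 h3
    have hXd : a i ∣ (b i - b' i) * ((α / a i) * an) := by
      have e : (b i - b' i) * ((α / a i) * an)
          = (b i * ((α / a i) * an) + 1) - (b' i * ((α / a i) * an) + 1) := by ring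
      rw [e]; exact dvd_sub h1 h1'
    have hdiff : a i ∣ b i - b' i := by
      have e : b i - b' i = (b i * ((α / a i) * an) + 1) * (b i - b' i)
          - b i * ((b i - b' i) * ((α / a i) * an)) := by ring
      rw [e]
      exact dvd_sub (h1.mul_right _) (hXd.mul_left _)
    have hz : b i - b' i = 0 := by
      apply Int.eq_zero_of_abs_lt_dvd hdiff
      have h4 := (hb i).1; have h5 := (hb i).2; have h6 := (hb' i).1; have h7 := (hb' i).2
      rcases abs_cases (b i - b' i) with ⟨h8, _⟩ | ⟨h8, _⟩ <;> omega
    omega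
  -- ===== common arithmetic functions =====
  set M : ℤ → ℤ := fun j => ∑ i, ((-(j * b i)) % a i) * (α / a i) with hMdef
  set E : ℤ → ℤ := fun j => M j / α with hEdef
  set νf : ℤ → ℤ := fun j => M j % α with hνdef
  set rn : ℤ → ℤ := fun j => (-(j * bn)) % an with hrndef
  set rn' : ℤ → ℤ := fun j => (-(j * bn')) % an' with hrn'def
  have hM0 : ∀ j, 0 ≤ M j := fun j => Finset.sum_nonneg fun i _ =>
    mul_nonneg (Int.emod_nonneg _ (ne_of_gt (hai0 i))) (by linarith [hquot1 i])
  have hE0 : ∀ j, 0 ≤ E j := fun j => Int.ediv_nonneg (hM0 j) hαpos.le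
  have hν0 : ∀ j, 0 ≤ νf j := fun j => Int.emod_nonneg _ (ne_of_gt hαpos)
  have hν1 : ∀ j, νf j < α := fun j => Int.emod_lt_of_pos _ hαpos
  have hrn0 : ∀ j, 0 ≤ rn j := fun j => Int.emod_nonneg _ (ne_of_gt hc)
  have hrn1 : ∀ j, rn j < an := fun j => Int.emod_lt_of_pos _ hc
  have hrn0' : ∀ j, 0 ≤ rn' j := fun j => Int.emod_nonneg _ (ne_of_gt hc')
  have hrn1' : ∀ j, rn' j < an' := fun j => Int.emod_lt_of_pos _ hc'
  have hMνE : ∀ j, M j = α * E j + νf j := fun j => (Int.mul_ediv_add_emod (M j) α).symm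
  have hMper : ∀ j, M (j + α) = M j := by
    intro j
    apply Finset.sum_congr rfl
    intro i _
    congr 1
    obtain ⟨g, hg⟩ := hdvd i
    have e : -((j + α) * b i) = -(j * b i) + (a i) * (-(g * b i)) := by rw [hg]; ring
    rw [e, Int.add_mul_emod_self_left]
  have hEper : ∀ j, E (j + α) = E j := by
    intro j
    show M (j + α) / α = M j / α
    rw [hMper j]
  -- primed data rewritten with b
  have hsys'b : e0' * (α * an') + (∑ i, b i * ((α / a i) * an')) + bn' * α = -1 := by
    have e1 : (∑ i, b i * ((α / a i) * an')) = ∑ i, b' i * ((α / a i) * an') :=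
      Finset.sum_congr rfl fun i _ => by rw [hbb i]
    rw [e1]; exact hsys'
  have hΔ'b : ∀ x : ℤ, Δ' x = 1 + |e0'| * x -
      ((∑ i, ⌈(x * b i : ℚ) / (a i : ℚ)⌉) + ⌈(x * bn' : ℚ) / (an' : ℚ)⌉) := by
    intro x
    have e1 : (∑ i, ⌈(x * b' i : ℚ) / (a i : ℚ)⌉) = ∑ i, ⌈(x * b i : ℚ) / (a i : ℚ)⌉ :=
      Finset.sum_congr rfl fun i _ => by rw [hbb i]
    rw [hΔ' x, e1]
  -- the w-identities
  have hwU : ∀ j, (α * an) * (Δ j - 1 + E j) = j - νf j * an - rn j * α := by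
    intro j
    have hA := sysA a ha1 α hdvd b an hc bn e0 hsys he0 Δ hΔ j
    have hA2 : (α * an) * (Δ j) = (α * an) + j - (M j) * an - (rn j) * α := hA
    have hMd := hMνE j
    linear_combination hA2 - an * hMd
  have hwU' : ∀ j, (α * an') * (Δ' j - 1 + E j) = j - νf j * an' - rn' j * α := by
    intro j
    have hA := sysA a ha1 α hdvd b an' hc' bn' e0' hsys'b he0' Δ' hΔ'b j
    have hA2 : (α * an') * (Δ' j) = (α * an') + j - (M j) * an' - (rn' j) * α := hA
    have hMd := hMνE j
    linear_combination hA2 - an' * hMd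
  -- coprimality
  have hcopα : IsCoprime α an := by
    rw [hα]; exact IsCoprime.prod_left fun i _ => hcopn i
  have hcopα' : IsCoprime α an' := by
    have h := IsCoprime.add_mul_left_right hcopα 1
    rw [mul_one] at h
    rw [han']; exact h
  -- K invertible mod α
  have hK : α ∣ (∑ i, b i * (α / a i)) * an + 1 := by
    have e : (∑ i, b i * (α / a i)) * an = ∑ i, b i * ((α / a i) * an) := by
      rw [Finset.sum_mul]; exact Finset.sum_congr rfl fun i _ => by ring
    refine ⟨-(e0 * an) - bn, ?_⟩
    rw [e]
    linear_combination hsys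
  -- ===== ΣE = t =====
  have hsum_M := sum_M a ha1 α hαpos hdvd b an hinv
  have hsum_nu := sum_nu a ha1 α hαpos hdvd b an hK
  have hcard : ((Finset.univ : Finset (Fin (n-1))).card : ℤ) = (n : ℤ) - 1 := by
    simp only [Finset.card_univ, Fintype.card_fin]
    omega
  have h2 : (∑ i : Fin (n-1), (α - α / a i)) = ((n:ℤ) - 1) * α - ∑ i, α / a i := by
    rw [Finset.sum_sub_distrib, Finset.sum_const, nsmul_eq_mul, hcard]
  have h1 : ∑ ρ ∈ Finset.Ico (0:ℤ) α, M ρ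
      = α * (∑ ρ ∈ Finset.Ico (0:ℤ) α, E ρ) + ∑ ρ ∈ Finset.Ico (0:ℤ) α, νf ρ := by
    rw [Finset.mul_sum, ← Finset.sum_add_distrib]
    exact Finset.sum_congr rfl fun ρ _ => hMνE ρ
  have h3 : (2*α) * (∑ ρ ∈ Finset.Ico (0:ℤ) α, E ρ) = (2*α) * t := by
    linear_combination hsum_M - hsum_nu - 2 * h1 + α * h2 - α * ht
  have hsumE : ∑ ρ ∈ Finset.Ico (0:ℤ) α, E ρ = t :=
    mul_left_cancel₀ (by nlinarith : (2*α) ≠ 0) h3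
  have ht0 : 0 ≤ t := by
    rw [← hsumE]
    exact Finset.sum_nonneg fun ρ _ => hE0 ρ
  have hEle : ∀ j, E j ≤ t := by
    intro j
    have hper' := periodic_shift E α hEper
    have hj : E j = E (j % α) := by
      have e : j = j % α + (j / α) * α := by
        have := Int.mul_ediv_add_emod j α; linarith
      conv_lhs => rw [e]
      exact hper' (j / α) (j % α)
    rw [hj]
    have hmem : j % α ∈ Finset.Ico (0:ℤ) α :=
      Finset.mem_Ico.mpr ⟨Int.emod_nonneg _ (ne_of_gt hαpos), Int.emod_lt_of_pos _ hαpos⟩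
    calc E (j % α) ≤ ∑ ρ ∈ Finset.Ico (0:ℤ) α, E ρ :=
          Finset.single_le_sum (fun ρ _ => hE0 ρ) hmem
      _ = t := hsumE
  -- ===== eventual positivity of Δ, Δ' =====
  have hΔpos : ∀ j : ℤ, α * an * (t + 2) ≤ j → 0 ≤ Δ j := by
    intro j hj
    have hw := hwU j
    have hb1 : νf j * an ≤ (α - 1) * an := mul_le_mul_of_nonneg_right (by linarith [hν1 j]) hc.le
    have hb2 : rn j * α ≤ (an - 1) * α := mul_le_mul_of_nonneg_right (by linarith [hrn1 j]) hαpos.le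
    have h3 : (α * an) * t ≤ (α * an) * (Δ j - 1 + E j) := by
      rw [hw]; nlinarith
    have h4 : t ≤ Δ j - 1 + E j := le_of_mul_le_mul_left h3 (by positivity)
    have h5 := hEle j
    omega
  have hΔ'pos : ∀ j : ℤ, α * an' * (t + 2) ≤ j → 0 ≤ Δ' j := by
    intro j hj
    have hw := hwU' j
    have hb1 : νf j * an' ≤ (α - 1) * an' := mul_le_mul_of_nonneg_right (by linarith [hν1 j]) hc'.le
    have hb2 : rn' j * α ≤ (an' - 1) * α := mul_le_mul_of_nonneg_right (by linarith [hrn1' j]) hαpos.le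
    have h3 : (α * an') * t ≤ (α * an') * (Δ' j - 1 + E j) := by
      rw [hw]; nlinarith
    have h4 : t ≤ Δ' j - 1 + E j := le_of_mul_le_mul_left h3 (by positivity)
    have h5 := hEle j
    omega
  -- ===== existence of minima =====
  obtain ⟨m, hm0, hmmin⟩ := min_exists τ Δ (α*an*(t+2))
    (mul_nonneg (mul_nonneg hαpos.le hc.le) (by omega)) hτ hΔpos
  obtain ⟨m2, hm20, hm2min⟩ := min_exists τ' Δ' (α*an'*(t+2))
    (mul_nonneg (mul_nonneg hαpos.le hc'.le) (by omega)) hτ' hΔ'pos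
  -- ===== T =====
  obtain ⟨T, h2T⟩ : ∃ T : ℤ, 2 * T = t * (t - 1) := by
    obtain ⟨u, hu⟩ := Int.even_mul_succ_self (t - 1)
    exact ⟨u, by linear_combination -hu⟩
  have h2T' : 2 * T = t * t - t := by linear_combination h2T
  -- ===== τ = θ =====
  have htauθ := tau_eq α an hαpos hc hcopα Δ τ E νf rn hτ hν0 hν1 hrn0 hrn1 hwU
  have htauθ' := tau_eq α an' hαpos hc' hcopα' Δ' τ' E νf rn' hτ' hν0 hν1 hrn0' hrn1' hwU'
  have htα0 : 0 ≤ t * α := mul_nonneg ht0 hαpos.le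
  -- ===== upper bound: τ' m2 ≤ τ m - T =====
  have hup : τ' m2 ≤ τ m - T := by
    have hτm := htauθ m hm0 (m + t * α + t + 1) (by omega)
    have hτ'm := htauθ' (m + t * α) (by omega) (m + t * α + t + 1) (by omega)
    rw [han'] at hτ'm
    have hacc := accum E α t hαpos hEper hsumE t ht0 m hm0
    have hC3 := C3 α an t T (m + t * α + t + 1) m hαpos ht0 h2T (by omega)
    have h6 : τ' (m + t * α) ≤ τ m - T := by linarith [hτ'm, hτm, hC3, hacc, h2T']
    have h7 : τ' m2 ≤ τ' (m + t * α) := hm2min _ (by omega)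
    linarith
  -- ===== lower bound: τ m - T ≤ τ' m2 =====
  have hdown : τ m - T ≤ τ' m2 := by
    have hk0 : 0 ≤ max 0 (pq α (m2 - t * an)) := le_max_left _ _
    set k := max 0 (pq α (m2 - t * an)) with hk
    have hkα0 : 0 ≤ k * α := mul_nonneg hk0 hαpos.le
    have hC4 := C4 α an t T (m2 + t + 1) m2 hαpos hc ht0 h2T (by omega)
    rw [← hk] at hC4
    have hτ'z := htauθ' m2 hm20 (m2 + t + 1) (by omega)
    rw [han'] at hτ'z
    rcases le_or_gt 0 (m2 - k * α) with hy | hy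
    · have hτy := htauθ (m2 - k * α) hy (m2 + t + 1) (by omega)
      have hacc := accum E α t hαpos hEper hsumE k hk0 (m2 - k*α) hy
      rw [show m2 - k*α + k*α = m2 by ring] at hacc
      have hmin := hmmin (m2 - k*α) hy
      linarith [hC4, hτy, hτ'z, hacc, hmin]
    · have hS0 : S α an (m2 + t + 1) (m2 - k*α) = 0 := by
        apply Finset.sum_eq_zero
        intro ℓ hℓ
        simp only [Finset.mem_Ico] at hℓ
        have h8 : 0 ≤ ℓ * an := mul_nonneg hℓ.1 hc.le
        have h9 := pq_nonpos α (m2 - k*α - ℓ*an) hαpos (by omega)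
        omega
      have hEmon : (∑ i ∈ Finset.Ico (0:ℤ) m2, E i) ≤ ∑ i ∈ Finset.Ico (0:ℤ) (k*α), E i := by
        apply Finset.sum_le_sum_of_subset_of_nonneg
        · exact Finset.Ico_subset_Ico le_rfl (by omega)
        · intro i _ _; exact hE0 i
      have hacc := accum E α t hαpos hEper hsumE k hk0 0 le_rfl
      rw [show (0:ℤ) + k*α = k*α by ring] at hacc
      have hz0 : ∑ i ∈ Finset.Ico (0:ℤ) (0:ℤ), E i = 0 := by simp
      have hτ0 : τ 0 = 0 := by rw [hτ 0]; simp
      have hmin0 := hmmin 0 le_rfl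
      linarith [hC4, hτ'z, hS0, hEmon, hacc, hz0, hτ0, hmin0]
  have hdiff : τ' m2 - τ m = -T := by linarith
  -- ===== conclusion =====
  refine ⟨m, m2, hm0, hm20, hmmin, hm2min, ?_, ?_⟩
  · rw [hdiff]
    have e : t * (t - 1) = 2 * T := h2T.symm
    rw [e, Int.mul_ediv_cancel_left _ (by norm_num : (2:ℤ) ≠ 0)]
  · have h2t1 : ((n:ℤ) - 2) * α - (∑ i, α / a i) = 2*t - 1 := by linarith
    rw [hdiff, h2t1]
    linear_combination (-4) * h2T
end

section
/- The Δ-functions of Y = Σ(a_1,…,a_n) and Y'' = Σ(a_1,…,a_{n−1},a_n+2α) agree on the central symmetric windows determining their maximal monotone subroots: for every integer i with 0 < i < a_n + α, one has Δ((t−1)·a_n − α + i) = Δ''((t−1)·(a_n+2α) + i). -/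
/-- Auxiliary: value of a ceiling of an integer quotient given Euclidean data. -/
lemma aux_ceil_div (x y d q r : ℤ) (hd : 0 < d) (hm : x * y = q * d - r)
    (h0 : 0 ≤ r) (h1 : r < d) : ⌈(x * y : ℚ) / (d : ℚ)⌉ = q := by
  have hd' : (0 : ℚ) < (d : ℚ) := by exact_mod_cast hd
  have hm' : (x : ℚ) * y = (q : ℚ) * d - r := by exact_mod_cast hm
  have h0' : (0 : ℚ) ≤ (r : ℚ) := by exact_mod_cast h0
  have h1' : (r : ℚ) < (d : ℚ) := by exact_mod_cast h1
  rw [Int.ceil_eq_iff]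
  constructor
  · rw [lt_div_iff₀ hd']
    nlinarith
  · rw [div_le_iff₀ hd']
    nlinarith

/-- Auxiliary: shifting the numerator by a multiple of the denominator shifts the ceiling. -/
lemma aux_shift (aj cj bj al t X X' : ℤ) (hX : X' = X + (2 * t - 1) * al)
    (h : aj * cj = al) (ha : aj ≠ 0) :
    ⌈(X' * bj : ℚ) / (aj : ℚ)⌉ = ⌈(X * bj : ℚ) / (aj : ℚ)⌉ + (2 * t - 1) * (cj * bj) := by
  have ha' : (aj : ℚ) ≠ 0 := by exact_mod_cast ha
  have h' : (aj : ℚ) * (cj : ℚ) = (al : ℚ) := by exact_mod_cast h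
  have key : (X' * bj : ℚ) / (aj : ℚ)
      = (X * bj : ℚ) / (aj : ℚ) + (((2 * t - 1) * (cj * bj) : ℤ) : ℚ) := by
    subst hX
    push_cast
    field_simp
    linear_combination (-(2 * (t : ℚ) - 1) * (bj : ℚ)) * h'
  rw [key, Int.ceil_add_intCast]

/-- Auxiliary: the central algebraic identity. -/
lemma aux_main (an al t i e0 e0' S bn bn' q q' r r' X X' D : ℤ)
    (hX : X = (t - 1) * an - al + i) (hX' : X' = (t - 1) * (an + 2 * al) + i)
    (h1 : e0 * (al * an) + S * an + bn * al = -1)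
    (h2 : e0' * (al * (an + 2 * al)) + S * (an + 2 * al) + bn' * al = -1)
    (h3 : X * bn = q * an - r)
    (h4 : X' * bn' = q' * (an + 2 * al) - r')
    (hD : D = -e0 * X + e0' * X' + (2 * t - 1) * S + q' - q)
    (hal : 0 < al) :
    an * (an + 2 * al) * D = 2 * i - (r + 1) * (an + 2 * al) + r' * an := by
  subst hX hX' hD
  have key : al * (an * (an + 2 * al) *
        (-e0 * ((t - 1) * an - al + i) + e0' * ((t - 1) * (an + 2 * al) + i)
          + (2 * t - 1) * S + q' - q))
      = al * (2 * i - (r + 1) * (an + 2 * al) + r' * an) := by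
    linear_combination (-(((t - 1) * an - al + i)) * (an + 2 * al)) * h1
      + (((t - 1) * (an + 2 * al) + i) * an) * h2
      + (al * (an + 2 * al)) * h3 + (-(al * an)) * h4
  exact mul_left_cancel₀ (ne_of_gt hal) key

/-- The Δ-functions of Σ(a_1,…,a_n) and Σ(a_1,…,a_{n−1},a_n+2α) agree on the central symmetric windows: for 0 < i < a_n + α, Δ((t−1)·a_n − α + i) = Δ″((t−1)·(a_n+2α) + i). (Here Δ′ plays the role of Δ″.) -/
theorem stmt_19 (n : ℕ) (hn : 3 ≤ n) (a : Fin (n - 1) → ℤ) (an : ℤ)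
    (ha : ∀ i, 2 ≤ a i) (han : 2 ≤ an)
    (hcop : ∀ i j, i ≠ j → IsCoprime (a i) (a j))
    (hcopn : ∀ i, IsCoprime (a i) an)
    (α P : ℤ) (hα : α = ∏ i, a i) (hP : P = α * an)
    (e0 : ℤ) (b : Fin (n - 1) → ℤ) (bn : ℤ)
    (hb : ∀ i, 1 ≤ b i ∧ b i < a i) (hbn : 1 ≤ bn ∧ bn < an)
    (heq : e0 * P + (∑ i, b i * (P / a i)) + bn * α = -1)
    (Δ : ℤ → ℤ)
    (hΔ : ∀ x : ℤ, Δ x = 1 + |e0| * x -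
      ((∑ i, ⌈(x * b i : ℚ) / (a i : ℚ)⌉) + ⌈(x * bn : ℚ) / (an : ℚ)⌉))
    -- the modified Seifert data with last fiber an' = an + 2 * α
    (an' P' : ℤ) (han' : an' = an + 2 * α) (hP' : P' = α * an')
    (e0' : ℤ) (b' : Fin (n - 1) → ℤ) (bn' : ℤ)
    (hb' : ∀ i, 1 ≤ b' i ∧ b' i < a i) (hbn' : 1 ≤ bn' ∧ bn' < an')
    (heq' : e0' * P' + (∑ i, b' i * (P' / a i)) + bn' * α = -1)
    (Δ' : ℤ → ℤ)
    (hΔ' : ∀ x : ℤ, Δ' x = 1 + |e0'| * x -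
      ((∑ i, ⌈(x * b' i : ℚ) / (a i : ℚ)⌉) + ⌈(x * bn' : ℚ) / (an' : ℚ)⌉))
    (t : ℤ) (ht : 2 * t = ((n : ℤ) - 2) * α - (∑ i, α / a i) + 1) :
    ∀ i : ℤ, 0 < i → i < an + α →
      Δ ((t - 1) * an - α + i) = Δ' ((t - 1) * (an + 2 * α) + i) := by
  intro i hi1 hi2
  -- basic positivity
  have ha0 : ∀ j, (0 : ℤ) < a j := fun j => by linarith [ha j]
  have hanpos : (0 : ℤ) < an := by linarith
  have hαpos : (0 : ℤ) < α := by
    rw [hα]; exact Finset.prod_pos fun j _ => ha0 j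
  have han'pos : (0 : ℤ) < an' := by rw [han']; linarith
  -- complementary products
  set c : Fin (n - 1) → ℤ := fun j => ∏ k ∈ Finset.univ.erase j, a k with hcdef
  have hac : ∀ j, a j * c j = α := fun j => by
    rw [hα, hcdef]
    exact Finset.mul_prod_erase Finset.univ a (Finset.mem_univ j)
  have hcpos : ∀ j, (0 : ℤ) < c j := fun j =>
    Finset.prod_pos fun k _ => ha0 k
  have hdvdc : ∀ j k : Fin (n - 1), j ≠ k → a j ∣ c k := fun j k hjk => by
    rw [hcdef]
    exact Finset.dvd_prod_of_mem a (Finset.mem_erase.mpr ⟨hjk, Finset.mem_univ j⟩)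
  -- exact division facts
  have hPd : ∀ j, P / a j = c j * an := fun j => by
    have h : P = a j * (c j * an) := by rw [hP, ← hac j]; ring
    rw [h, Int.mul_ediv_cancel_left _ (ne_of_gt (ha0 j))]
  have hPd' : ∀ j, P' / a j = c j * an' := fun j => by
    have h : P' = a j * (c j * an') := by rw [hP', ← hac j]; ring
    rw [h, Int.mul_ediv_cancel_left _ (ne_of_gt (ha0 j))]
  -- rewrite the two defining equations
  have heq2 : e0 * (α * an) + (∑ j, c j * b j) * an + bn * α = -1 := by
    have hs : ∑ j, b j * (P / a j) = (∑ j, c j * b j) * an := by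
      rw [Finset.sum_mul]
      exact Finset.sum_congr rfl fun j _ => by rw [hPd j]; ring
    rw [← hP]; rw [hs] at heq; linarith [heq]
  have heq2' : e0' * (α * an') + (∑ j, c j * b' j) * an' + bn' * α = -1 := by
    have hs : ∑ j, b' j * (P' / a j) = (∑ j, c j * b' j) * an' := by
      rw [Finset.sum_mul]
      exact Finset.sum_congr rfl fun j _ => by rw [hPd' j]; ring
    rw [← hP']; rw [hs] at heq'; linarith [heq']
  -- divisibility key: a j ∣ b j * (c j * an) + 1 (and primed version)
  have key : ∀ (e B A : ℤ) (bb : Fin (n - 1) → ℤ),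
      (e * (α * A) + (∑ j, c j * bb j) * A + B * α = -1) →
      ∀ j, a j ∣ bb j * (c j * A) + 1 := by
    intro e B A bb hE j
    have hsplit : c j * bb j + ∑ k ∈ Finset.univ.erase j, c k * bb k
        = ∑ k, c k * bb k :=
      Finset.add_sum_erase Finset.univ (fun k => c k * bb k) (Finset.mem_univ j)
    obtain ⟨d, hd⟩ : a j ∣ ∑ k ∈ Finset.univ.erase j, c k * bb k :=
      Finset.dvd_sum fun k hk =>
        Dvd.dvd.mul_right (hdvdc j k (Ne.symm (Finset.mem_erase.mp hk).1)) _
    obtain ⟨u, hu⟩ : a j ∣ α := ⟨c j, (hac j).symm⟩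
    refine ⟨-(e * u * A) - d * A - B * u, ?_⟩
    have hE' : e * (α * A) + (c j * bb j + ∑ k ∈ Finset.univ.erase j, c k * bb k) * A
        + B * α = -1 := by rw [hsplit]; exact hE
    linear_combination hE' + (-(e * A) - B) * hu + (-A) * hd
  -- b' = b
  have hbb : ∀ j, b' j = b j := by
    intro j
    have h1 := key e0 bn an b heq2 j
    have h2' := key e0' bn' an' b' heq2' j
    have h2 : a j ∣ b' j * (c j * an) + 1 := by
      obtain ⟨v, hv⟩ := h2'
      refine ⟨v - 2 * b' j * c j * c j, ?_⟩
      have : an' = an + 2 * (a j * c j) := by rw [hac j, han']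
      linear_combination hv + (-(b' j * c j)) * this
    have h3 : a j ∣ b' j - b j := by
      obtain ⟨v1, hv1⟩ := h1
      obtain ⟨v2, hv2⟩ := h2
      exact ⟨b' j * v1 - b j * v2, by linear_combination (b' j) * hv1 - (b j) * hv2⟩
    obtain ⟨k, hk⟩ := h3
    have hb1 := hb j; have hb2 := hb' j
    have hk0 : k = 0 := by
      by_contra hne
      rcases lt_or_gt_of_ne hne with h | h
      · have : a j * k ≤ a j * (-1) := by
          apply mul_le_mul_of_nonneg_left (by omega) (le_of_lt (ha0 j))
        have hm1 : a j * (-1) = -(a j) := by ring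
        omega
      · have : a j * 1 ≤ a j * k := by
          apply mul_le_mul_of_nonneg_left (by omega) (le_of_lt (ha0 j))
        have hm1 : a j * 1 = a j := by ring
        omega
    rw [hk0, mul_zero] at hk
    omega
  -- signs of e0, e0'
  have hSnn : (0 : ℤ) ≤ ∑ j, c j * b j :=
    Finset.sum_nonneg fun j _ =>
      mul_nonneg (le_of_lt (hcpos j)) (by linarith [(hb j).1])
  have he0 : e0 < 0 := by
    by_contra h
    push_neg at h
    have h1 : 0 ≤ e0 * (α * an) := mul_nonneg h (le_of_lt (mul_pos hαpos hanpos))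
    have h2 : 0 ≤ (∑ j, c j * b j) * an := mul_nonneg hSnn (le_of_lt hanpos)
    have h3 : 0 < bn * α := mul_pos (by linarith [hbn.1]) hαpos
    linarith [heq2]
  have he0' : e0' < 0 := by
    by_contra h
    push_neg at h
    have h1 : 0 ≤ e0' * (α * an') := mul_nonneg h (le_of_lt (mul_pos hαpos han'pos))
    have h2 : 0 ≤ (∑ j, c j * b' j) * an' := by
      refine mul_nonneg (Finset.sum_nonneg fun j _ =>
        mul_nonneg (le_of_lt (hcpos j)) (by linarith [(hb' j).1])) (le_of_lt han'pos)
    have h3 : 0 < bn' * α := mul_pos (by linarith [hbn'.1]) hαpos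
    linarith [heq2']
  -- the two evaluation points
  set X : ℤ := (t - 1) * an - α + i with hXdef
  set X' : ℤ := (t - 1) * (an + 2 * α) + i with hX'def
  -- Euclidean data for the last ceilings
  set r : ℤ := (-(X * bn)) % an with hrdef
  set q : ℤ := -((-(X * bn)) / an) with hqdef
  have hr0 : 0 ≤ r := Int.emod_nonneg _ (ne_of_gt hanpos)
  have hr1 : r < an := Int.emod_lt_of_pos _ hanpos
  have hqr : X * bn = q * an - r := by
    have h := Int.mul_ediv_add_emod (-(X * bn)) an
    rw [hqdef, hrdef]; linarith [h]
  set r' : ℤ := (-(X' * bn')) % an' with hr'def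
  set q' : ℤ := -((-(X' * bn')) / an') with hq'def
  have hr'0 : 0 ≤ r' := Int.emod_nonneg _ (ne_of_gt han'pos)
  have hr'1 : r' < an' := Int.emod_lt_of_pos _ han'pos
  have hqr' : X' * bn' = q' * an' - r' := by
    have h := Int.mul_ediv_add_emod (-(X' * bn')) an'
    rw [hq'def, hr'def]; linarith [h]
  -- ceiling values
  have hceilq : ⌈(X * bn : ℚ) / (an : ℚ)⌉ = q :=
    aux_ceil_div _ _ _ _ _ hanpos hqr hr0 hr1
  have hceilq' : ⌈(X' * bn' : ℚ) / (an' : ℚ)⌉ = q' :=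
    aux_ceil_div _ _ _ _ _ han'pos hqr' hr'0 hr'1
  -- sum of shifted ceilings
  have hsumshift : (∑ j, ⌈(X' * b' j : ℚ) / (a j : ℚ)⌉)
      = (∑ j, ⌈(X * b j : ℚ) / (a j : ℚ)⌉) + (2 * t - 1) * (∑ j, c j * b j) := by
    have step : ∀ j : Fin (n - 1), ⌈(X' * b' j : ℚ) / (a j : ℚ)⌉
        = ⌈(X * b j : ℚ) / (a j : ℚ)⌉ + (2 * t - 1) * (c j * b j) := by
      intro j
      rw [hbb j]
      exact aux_shift (a j) (c j) (b j) α t X X'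
        (by rw [hXdef, hX'def]; ring) (hac j) (ne_of_gt (ha0 j))
    rw [Finset.sum_congr rfl fun j _ => step j, Finset.sum_add_distrib,
      ← Finset.mul_sum]
  -- expressions for Δ X and Δ' X'
  have habs : |e0| = -e0 := abs_of_neg he0
  have habs' : |e0'| = -e0' := abs_of_neg he0'
  have hDX : Δ X = 1 + (-e0) * X -
      ((∑ j, ⌈(X * b j : ℚ) / (a j : ℚ)⌉) + q) := by
    rw [hΔ X, habs, hceilq]
  have hDX' : Δ' X' = 1 + (-e0') * X' -
      ((∑ j, ⌈(X * b j : ℚ) / (a j : ℚ)⌉) + (2 * t - 1) * (∑ j, c j * b j) + q') := by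
    rw [hΔ' X', habs', hceilq', hsumshift]
  -- the main identity
  have hS' : (∑ j, c j * b' j) = ∑ j, c j * b j :=
    Finset.sum_congr rfl fun j _ => by rw [hbb j]
  rw [hS'] at heq2'
  rw [han'] at heq2' hqr' hr'1 han'pos
  have hmain : an * (an + 2 * α) * (Δ X - Δ' X')
      = 2 * i - (r + 1) * (an + 2 * α) + r' * an := by
    have hD : Δ X - Δ' X' = -e0 * X + e0' * X'
        + (2 * t - 1) * (∑ j, c j * b j) + q' - q := by
      rw [hDX, hDX']; ring
    exact aux_main an α t i e0 e0' (∑ j, c j * b j) bn bn' q q' r r' X X' _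
      hXdef hX'def heq2 heq2' hqr hqr' hD hαpos
  -- conclude by bounding
  have hpos : (0 : ℤ) < an * (an + 2 * α) := mul_pos hanpos (by linarith)
  have p1 : 0 ≤ r * (an + 2 * α) := mul_nonneg hr0 (by linarith)
  have p2 : r' * an ≤ (an + 2 * α - 1) * an :=
    mul_le_mul_of_nonneg_right (by linarith) (le_of_lt hanpos)
  have p3 : (r + 1) * (an + 2 * α) ≤ an * (an + 2 * α) :=
    mul_le_mul_of_nonneg_right (by linarith) (by linarith)
  have p4 : 0 ≤ r' * an := mul_nonneg hr'0 (le_of_lt hanpos)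
  have hub : an * (an + 2 * α) * (Δ X - Δ' X') < an * (an + 2 * α) * 1 := by
    rw [hmain, mul_one]; linarith
  have hlb : an * (an + 2 * α) * (-1) < an * (an + 2 * α) * (Δ X - Δ' X') := by
    rw [hmain]; linarith
  have h1 : Δ X - Δ' X' < 1 := lt_of_mul_lt_mul_left hub (le_of_lt hpos)
  have h2 : -1 < Δ X - Δ' X' := lt_of_mul_lt_mul_left hlb (le_of_lt hpos)
  omega
end
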